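/- arXiv:1806.06903 — 8 statements merged into one kernel-verified Lean document; each statement's English description precedes it below -/
import Mathlib

section
/- Let c > 0 and let G be an oriented graph on n vertices with minimum semidegree δ⁰(G) ≥ (1/2 - c)n. Then every vertex of G is contained in at least n²/8 - 2cn² cyclic triangles and at most n²/8 + 2cn² cyclic triangles. -/
open Finset
open scoped Classical

/-- An oriented graph: no loops and no pair of antiparallel edges. -/
def IsOriented {n : ℕ} (G : Fin n → Fin n → Prop) : Prop :=
  (∀ v, ¬ G v v) ∧ ∀ u v : Fin n, G u v → ¬ G v u

/-- `d⁺(v, A)`: number of out-neighbors of `v` in `A`. -/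
noncomputable def outDegOn {n : ℕ} (G : Fin n → Fin n → Prop) (v : Fin n)
    (A : Finset (Fin n)) : ℕ :=
  (A.filter fun u => G v u).card

/-- `d⁻(v, A)`: number of in-neighbors of `v` in `A`. -/
noncomputable def inDegOn {n : ℕ} (G : Fin n → Fin n → Prop) (v : Fin n)
    (A : Finset (Fin n)) : ℕ :=
  (A.filter fun u => G u v).card

/-- outdegree `d⁺(v)`. -/
noncomputable def outDeg {n : ℕ} (G : Fin n → Fin n → Prop) (v : Fin n) : ℕ :=
  outDegOn G v univ

/-- indegree `d⁻(v)`. -/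
noncomputable def inDeg {n : ℕ} (G : Fin n → Fin n → Prop) (v : Fin n) : ℕ :=
  inDegOn G v univ

/-- The minimum semidegree condition `δ⁰(G) ≥ b`. -/
def MinSemidegreeGE {n : ℕ} (G : Fin n → Fin n → Prop) (b : ℝ) : Prop :=
  ∀ v : Fin n, b ≤ (outDeg G v : ℝ) ∧ b ≤ (inDeg G v : ℝ)

/-- `e⁺(A, B)`: number of edges directed from `A` to `B`. -/
noncomputable def eOut {n : ℕ} (G : Fin n → Fin n → Prop) (A B : Finset (Fin n)) : ℕ :=
  ∑ a ∈ A, outDegOn G a B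

/-- `s` is the vertex set of a cyclic triangle. -/
def IsCycTri {n : ℕ} (G : Fin n → Fin n → Prop) (s : Finset (Fin n)) : Prop :=
  ∃ a b c : Fin n, G a b ∧ G b c ∧ G c a ∧ s = {a, b, c}

/-- `s` is the vertex set of a transitive triangle. -/
def IsTrnTri {n : ℕ} (G : Fin n → Fin n → Prop) (s : Finset (Fin n)) : Prop :=
  ∃ a b c : Fin n, G a b ∧ G b c ∧ G a c ∧ s = {a, b, c}

/-- `cyc(A)`: number of cyclic triangles with all vertices in `A`. -/
noncomputable def cycIn {n : ℕ} (G : Fin n → Fin n → Prop) (A : Finset (Fin n)) : ℕ :=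
  ((A.powersetCard 3).filter fun s => IsCycTri G s).card

/-- `trn(A)`: number of transitive triangles with all vertices in `A`. -/
noncomputable def trnIn {n : ℕ} (G : Fin n → Fin n → Prop) (A : Finset (Fin n)) : ℕ :=
  ((A.powersetCard 3).filter fun s => IsTrnTri G s).card

/-- `cyc(A, B, C)`: number of cyclic triangles with one vertex in each of `A`, `B`, `C`
(in the sense of some labeling of its vertex set). -/
noncomputable def cyc3 {n : ℕ} (G : Fin n → Fin n → Prop) (A B C : Finset (Fin n)) : ℕ :=
  (((univ : Finset (Fin n)).powersetCard 3).filter fun s =>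
    IsCycTri G s ∧ ∃ x ∈ A, ∃ y ∈ B, ∃ z ∈ C, s = ({x, y, z} : Finset (Fin n))).card

/-- A cyclic triangle tiling: a collection of vertex-disjoint cyclic triangles. -/
def IsCycTiling {n : ℕ} (G : Fin n → Fin n → Prop) (C : Finset (Finset (Fin n))) : Prop :=
  (∀ s ∈ C, IsCycTri G s) ∧ ∀ s ∈ C, ∀ t ∈ C, s ≠ t → Disjoint s t

/-- A cyclic triangle factor: a tiling covering every vertex. -/
def IsCycFactor {n : ℕ} (G : Fin n → Fin n → Prop) (C : Finset (Finset (Fin n))) : Prop :=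
  IsCycTiling G C ∧ C.biUnion id = univ

/-- `W` can be perfectly covered by vertex-disjoint cyclic triangles
(i.e. `H(G)[W]` has a perfect matching). -/
def HasCycPM {n : ℕ} (G : Fin n → Fin n → Prop) (W : Finset (Fin n)) : Prop :=
  ∃ C : Finset (Finset (Fin n)), IsCycTiling G C ∧ C.biUnion id = W

/-- The number of `(H(G), x, y)`-linking `(3ℓ-1)`-sets. -/
noncomputable def linkCount {n : ℕ} (G : Fin n → Fin n → Prop) (ℓ : ℕ) (x y : Fin n) : ℕ :=
  (((univ : Finset (Fin n)).powersetCard (3 * ℓ - 1)).filter fun S =>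
    x ∉ S ∧ y ∉ S ∧ HasCycPM G (insert x S) ∧ HasCycPM G (insert y S)).card

-- AUX (tested)
lemma count_eq_pairs' {n : ℕ} (G : Fin n → Fin n → Prop) (hG : IsOriented G) (v : Fin n) :
    ((((univ : Finset (Fin n)).powersetCard 3).filter fun s =>
        v ∈ s ∧ IsCycTri G s).card)
      = ((((univ.filter fun u => G v u) ×ˢ (univ.filter fun w => G w v)).filter
          fun p => G p.1 p.2).card) := by
  obtain ⟨hloop, hanti⟩ := hG
  refine (Finset.card_bij (fun p _ => ({v, p.1, p.2} : Finset (Fin n))) ?_ ?_ ?_).symm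
  · rintro ⟨u, w⟩ hp
    simp only [mem_filter, mem_product, mem_univ, true_and] at hp
    obtain ⟨⟨hvu, hwv⟩, huw⟩ := hp
    have hvu' : v ≠ u := fun h => hloop v (h ▸ hvu)
    have hvw' : v ≠ w := fun h => hloop v (h ▸ hwv)
    have huw' : u ≠ w := fun h => hanti u v (hanti w v hwv (h ▸ hvu)).elim (h ▸ hvu)
    simp only [mem_filter, Finset.mem_powersetCard]
    refine ⟨⟨subset_univ _, ?_⟩, by simp, v, u, w, hvu, huw, hwv, rfl⟩
    rw [card_insert_of_notMem (by simp [hvu', hvw']), card_insert_of_notMem (by simp [huw']),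
      card_singleton]
  · rintro ⟨u, w⟩ hp ⟨u', w'⟩ hq h
    simp only [mem_filter, mem_product, mem_univ, true_and] at hp hq
    simp only at h
    obtain ⟨⟨hvu, hwv⟩, huw⟩ := hp
    obtain ⟨⟨hvu', hwv'⟩, huw'⟩ := hq
    have h1 : u' ∈ ({v, u, w} : Finset (Fin n)) := by rw [h]; simp
    have h2 : w' ∈ ({v, u, w} : Finset (Fin n)) := by rw [h]; simp
    simp only [mem_insert, mem_singleton] at h1 h2
    have hu : u' = u := by
      rcases h1 with h1 | h1 | h1
      · exact absurd (h1 ▸ hvu') (hloop v)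
      · exact h1
      · subst h1; exact absurd hwv (hanti v u' hvu')
    subst hu
    have hw : w' = w := by
      rcases h2 with h2 | h2 | h2
      · exact absurd (h2 ▸ hwv') (hloop v)
      · subst h2; exact absurd huw' (hloop _)
      · exact h2
    simp [hw]
  · intro s hs
    simp only [mem_filter, Finset.mem_powersetCard] at hs
    obtain ⟨⟨hsub, hcard⟩, hvs, a, b, c, hab, hbc, hca, rfl⟩ := hs
    simp only [mem_insert, mem_singleton] at hvs
    rcases hvs with rfl | rfl | rfl
    · exact ⟨(b, c), by simp [mem_filter, mem_product, hab, hbc, hca], rfl⟩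
    · refine ⟨(c, a), by simp [mem_filter, mem_product, hab, hbc, hca], ?_⟩
      ext x; simp; tauto
    · refine ⟨(a, b), by simp [mem_filter, mem_product, hab, hbc, hca], ?_⟩
      ext x; simp; tauto

lemma pairs_eq_sum' {n : ℕ} (G : Fin n → Fin n → Prop) (A B : Finset (Fin n)) :
    ((A ×ˢ B).filter fun p => G p.1 p.2).card
      = ∑ w ∈ B, (A.filter fun u => G u w).card := by
  rw [Finset.card_eq_sum_card_fiberwise (f := Prod.snd) (t := B)
    (fun p hp => (Finset.mem_product.1 (Finset.mem_filter.1 hp).1).2)]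
  refine Finset.sum_congr rfl fun w hw => ?_
  refine Finset.card_bij (fun p _ => p.1) ?_ ?_ ?_
  · rintro ⟨u, w'⟩ hp
    simp only [mem_filter, mem_product] at hp ⊢
    obtain ⟨⟨⟨hA, hB⟩, hE⟩, rfl⟩ := hp
    exact ⟨hA, hE⟩
  · rintro ⟨u, w1⟩ hp ⟨u2, w2⟩ hq h
    simp only [mem_filter, mem_product] at hp hq
    simp only at h
    simp [h, hp.2, hq.2]
  · intro u hu
    simp only [mem_filter] at hu
    exact ⟨(u, w), by simp [mem_filter, mem_product, hu.1, hu.2, hw], rfl⟩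

lemma sum_swap_card' {n : ℕ} (G : Fin n → Fin n → Prop) (B : Finset (Fin n)) :
    ∑ w ∈ B, (B.filter fun x => G x w).card
      = ∑ w ∈ B, (B.filter fun x => G w x).card := by
  simp only [Finset.card_filter]
  exact Finset.sum_comm

lemma lower_arith' (c n δ a b N SIn eIn : ℝ) (hδ : δ = (1/2 - c)*n) (hc : 0 < c) (hc6 : c ≤ 1/6)
    (h1 : SIn + b*(a+b+1) ≤ N + eIn + b*n) (h3 : 2*eIn + b ≤ b*b) (hSIn : b*δ ≤ SIn)
    (ha : δ ≤ a) (hb : δ ≤ b) (hab : a + b + 1 ≤ n) (hn : 0 ≤ n) :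
    n^2/8 - 2*c*n^2 ≤ N := by
  have hb0 : 0 ≤ b := le_trans (by nlinarith) hb
  have h4cn : 0 ≤ b + δ - 4*c*n := by nlinarith
  nlinarith [mul_nonneg (sub_nonneg.2 hb) h4cn, mul_nonneg hc.le (sq_nonneg n),
    mul_nonneg (mul_nonneg hc.le hc.le) (sq_nonneg n), mul_nonneg hb0 (sub_nonneg.2 ha)]

lemma upper_arith' (c n δ b N SIn SOut eIn : ℝ) (hδ : δ = (1/2 - c)*n) (hc : 0 < c) (hc1 : c ≤ 1)
    (h2 : N + eIn ≤ SIn) (h4 : SOut + SIn + b*b ≤ 2*eIn + b*n) (h5 : SIn + SOut + b ≤ b*n)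
    (hSOut : b*δ ≤ SOut) (hb0 : 0 ≤ b) :
    N ≤ n^2/8 + 2*c*n^2 := by
  nlinarith [sq_nonneg (b - (n/2 + c*n)), mul_nonneg hc.le (sq_nonneg n),
    mul_nonneg (mul_nonneg hc.le hc.le) (sq_nonneg n), hb0]

lemma upper_trivial' (c n a b N : ℝ) (hc : 1 < c) (hN : N ≤ b*a) (hab : a + b + 1 ≤ n)
    (ha : 0 ≤ a) (hb : 0 ≤ b) : N ≤ n^2/8 + 2*c*n^2 := by
  nlinarith [sq_nonneg (a - b), sq_nonneg n, mul_nonneg ha hb]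

theorem stmt_1 (c : ℝ) (hc : 0 < c) (n : ℕ) (G : Fin n → Fin n → Prop)
    (hG : IsOriented G) (hdeg : MinSemidegreeGE G ((1/2 - c) * n)) :
    ∀ v : Fin n,
      (n : ℝ)^2 / 8 - 2 * c * n^2 ≤
        ((((univ : Finset (Fin n)).powersetCard 3).filter fun s =>
          v ∈ s ∧ IsCycTri G s).card : ℝ) ∧
      ((((univ : Finset (Fin n)).powersetCard 3).filter fun s =>
          v ∈ s ∧ IsCycTri G s).card : ℝ) ≤ (n : ℝ)^2 / 8 + 2 * c * n^2 := by
  intro v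
  obtain ⟨hloop, hanti⟩ := hG
  set A : Finset (Fin n) := univ.filter fun u => G v u with hAdef
  set B : Finset (Fin n) := univ.filter fun w => G w v with hBdef
  set N : ℕ := ∑ w ∈ B, (A.filter fun u => G u w).card with hNdef
  have hcount : ((((univ : Finset (Fin n)).powersetCard 3).filter fun s =>
      v ∈ s ∧ IsCycTri G s).card) = N :=
    (count_eq_pairs' G ⟨hloop, hanti⟩ v).trans (pairs_eq_sum' G A B)
  -- basic set facts
  have hvA : v ∉ A := by simp [hAdef, hloop v]
  have hvB : v ∉ B := by simp [hBdef, hloop v]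
  have hAB : Disjoint A B := by
    rw [Finset.disjoint_left]
    intro x hx hx'
    rw [hAdef, mem_filter] at hx
    rw [hBdef, mem_filter] at hx'
    exact hanti v x hx.2 hx'.2
  have habn : A.card + B.card + 1 ≤ n := by
    have h1 : ((A ∪ B) ∪ {v}).card = A.card + B.card + 1 := by
      rw [card_union_of_disjoint (by simp [hvA, hvB]),
        card_union_of_disjoint hAB, card_singleton]
    calc A.card + B.card + 1 = ((A ∪ B) ∪ {v}).card := h1.symm
      _ ≤ (univ : Finset (Fin n)).card := card_le_card (subset_univ _)
      _ = n := by simp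
  -- degree identities
  have houtdeg : ∀ w : Fin n, outDeg G w = (univ.filter fun x => G w x).card := fun w => rfl
  have hindeg : ∀ w : Fin n, inDeg G w = (univ.filter fun x => G x w).card := fun w => rfl
  have hacard : outDeg G v = A.card := rfl
  have hbcard : inDeg G v = B.card := rfl
  have hn1 : 1 ≤ n := Fin.pos v
  -- per-vertex inequality (2): inDeg + outDeg + 1 ≤ n
  have h2 : ∀ w : Fin n, inDeg G w + outDeg G w + 1 ≤ n := by
    intro w
    have hdisj : Disjoint (univ.filter fun x => G x w) (univ.filter fun x => G w x) := by
      rw [Finset.disjoint_left]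
      intro x hx hx'
      exact hanti x w (mem_filter.1 hx).2 (mem_filter.1 hx').2
    have hsub : (univ.filter fun x => G x w) ∪ (univ.filter fun x => G w x)
        ⊆ univ.erase w := by
      intro x hx
      rcases mem_union.1 hx with hx | hx
      · exact mem_erase.2 ⟨fun h => hloop w (h ▸ (mem_filter.1 hx).2), mem_univ x⟩
      · exact mem_erase.2 ⟨fun h => hloop w (h ▸ (mem_filter.1 hx).2), mem_univ x⟩
    have := card_le_card hsub
    rw [card_union_of_disjoint hdisj, card_erase_of_mem (mem_univ w)] at this
    rw [hindeg, houtdeg]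
    simp only [card_univ, Fintype.card_fin] at this
    omega
  -- (3): within-B edges at w
  have h3 : ∀ w ∈ B, (B.filter fun x => G x w).card + (B.filter fun x => G w x).card + 1
      ≤ B.card := by
    intro w hw
    have hdisj : Disjoint (B.filter fun x => G x w) (B.filter fun x => G w x) := by
      rw [Finset.disjoint_left]
      intro x hx hx'
      exact hanti x w (mem_filter.1 hx).2 (mem_filter.1 hx').2
    have hsub : (B.filter fun x => G x w) ∪ (B.filter fun x => G w x) ⊆ B.erase w := by
      intro x hx
      rcases mem_union.1 hx with hx | hx
      · exact mem_erase.2 ⟨fun h => hloop w (h ▸ (mem_filter.1 hx).2), (mem_filter.1 hx).1⟩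
      · exact mem_erase.2 ⟨fun h => hloop w (h ▸ (mem_filter.1 hx).2), (mem_filter.1 hx).1⟩
    have hcc := card_le_card hsub
    rw [card_union_of_disjoint hdisj] at hcc
    have hce : (B.erase w).card + 1 = B.card := card_erase_add_one hw
    omega
  -- (4): outDeg + inDeg + |B| ≤ Bout + Bin + n
  have h4 : ∀ w ∈ B, outDeg G w + inDeg G w + B.card
      ≤ (B.filter fun x => G w x).card + (B.filter fun x => G x w).card + n := by
    intro w hw
    have hsplitO : outDeg G w = (B.filter fun x => G w x).card + (Bᶜ.filter fun x => G w x).card := by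
      rw [houtdeg, ← card_union_of_disjoint (disjoint_filter_filter disjoint_compl_right),
        ← filter_union, union_compl]
    have hsplitI : inDeg G w = (B.filter fun x => G x w).card + (Bᶜ.filter fun x => G x w).card := by
      rw [hindeg, ← card_union_of_disjoint (disjoint_filter_filter disjoint_compl_right),
        ← filter_union, union_compl]
    have hdisj : Disjoint (Bᶜ.filter fun x => G w x) (Bᶜ.filter fun x => G x w) := by
      rw [Finset.disjoint_left]
      intro x hx hx'
      exact hanti w x (mem_filter.1 hx).2 (mem_filter.1 hx').2
    have hsub : (Bᶜ.filter fun x => G w x) ∪ (Bᶜ.filter fun x => G x w) ⊆ Bᶜ :=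
      union_subset (filter_subset _ _) (filter_subset _ _)
    have hcc := card_le_card hsub
    rw [card_union_of_disjoint hdisj, card_compl] at hcc
    have hBn : B.card ≤ n := by
      have := card_le_card (subset_univ B); simpa using this
    simp only [Fintype.card_fin] at hcc
    omega
  -- (1): inDeg w + (a+b+1) ≤ Af + Bf + n  for w ∈ B
  have h1 : ∀ w ∈ B, inDeg G w + (A.card + B.card + 1)
      ≤ (A.filter fun x => G x w).card + (B.filter fun x => G x w).card + n := by
    intro w hw
    have hsub : (univ.filter fun x => G x w) ⊆
        (A.filter fun x => G x w) ∪ (B.filter fun x => G x w) ∪ ((A ∪ B) ∪ {v})ᶜ := by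
      intro x hx
      have hxw : G x w := (mem_filter.1 hx).2
      by_cases hxA : x ∈ A
      · exact mem_union.2 (Or.inl (mem_union.2 (Or.inl (mem_filter.2 ⟨hxA, hxw⟩))))
      by_cases hxB : x ∈ B
      · exact mem_union.2 (Or.inl (mem_union.2 (Or.inr (mem_filter.2 ⟨hxB, hxw⟩))))
      have hxv : x ≠ v := by
        rintro rfl
        exact hanti x w hxw ((mem_filter.1 hw).2)
      refine mem_union.2 (Or.inr ?_)
      simp [hxA, hxB, hxv]
    have hcc := card_le_card hsub
    have hcu : (((A ∪ B) ∪ {v})ᶜ).card = n - (A.card + B.card + 1) := by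
      rw [card_compl, card_union_of_disjoint (by simp [hvA, hvB]),
        card_union_of_disjoint hAB, card_singleton]
      simp
    have hcc2 := le_trans hcc (le_trans (card_union_le _ _)
      (add_le_add (card_union_le _ _) le_rfl))
    rw [hcu] at hcc2
    rw [hindeg]
    omega
  -- (2'): Af + Bf ≤ inDeg w
  have h2' : ∀ w ∈ B, (A.filter fun x => G x w).card + (B.filter fun x => G x w).card
      ≤ inDeg G w := by
    intro w _
    rw [hindeg, ← card_union_of_disjoint (disjoint_filter_filter hAB)]
    exact card_le_card (union_subset
      (fun x hx => mem_filter.2 ⟨mem_univ x, (mem_filter.1 hx).2⟩)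
      (fun x hx => mem_filter.2 ⟨mem_univ x, (mem_filter.1 hx).2⟩))
  -- real sums
  have hbR : (0:ℝ) ≤ (B.card : ℝ) := Nat.cast_nonneg _
  have hnR : (0:ℝ) ≤ (n : ℝ) := Nat.cast_nonneg _
  set SIn : ℝ := ∑ w ∈ B, (inDeg G w : ℝ) with hSIndef
  set SOut : ℝ := ∑ w ∈ B, (outDeg G w : ℝ) with hSOutdef
  set eIn : ℝ := ∑ w ∈ B, ((B.filter fun x => G x w).card : ℝ) with heIndef
  set eOutB : ℝ := ∑ w ∈ B, ((B.filter fun x => G w x).card : ℝ) with heOutdef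
  set NR : ℝ := ∑ w ∈ B, ((A.filter fun u => G u w).card : ℝ) with hNRdef
  have hNR : (N : ℝ) = NR := by rw [hNdef, hNRdef]; push_cast; rfl
  have hee : eIn = eOutB := by
    rw [heIndef, heOutdef]
    have := congrArg (fun k : ℕ => (k : ℝ)) (sum_swap_card' G B)
    push_cast at this
    exact this
  have HS1R : SIn + B.card * ((A.card:ℝ) + B.card + 1) ≤ NR + eIn + B.card * n := by
    have hper : ∀ w ∈ B, (inDeg G w : ℝ) + ((A.card:ℝ) + B.card + 1)
        ≤ ((A.filter fun x => G x w).card : ℝ) + ((B.filter fun x => G x w).card : ℝ) + n := by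
      intro w hw; exact_mod_cast h1 w hw
    have := Finset.sum_le_sum hper
    simp only [Finset.sum_add_distrib, Finset.sum_const, nsmul_eq_mul] at this
    linarith
  have HS2R : NR + eIn ≤ SIn := by
    have hper : ∀ w ∈ B, ((A.filter fun x => G x w).card : ℝ)
        + ((B.filter fun x => G x w).card : ℝ) ≤ (inDeg G w : ℝ) := by
      intro w hw; exact_mod_cast h2' w hw
    have := Finset.sum_le_sum hper
    simp only [Finset.sum_add_distrib] at this
    linarith
  have HS3R : 2 * eIn + B.card ≤ (B.card : ℝ) * B.card := by
    have hper : ∀ w ∈ B, ((B.filter fun x => G x w).card : ℝ)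
        + ((B.filter fun x => G w x).card : ℝ) + 1 ≤ (B.card : ℝ) := by
      intro w hw; exact_mod_cast h3 w hw
    have := Finset.sum_le_sum hper
    simp only [Finset.sum_add_distrib, Finset.sum_const, nsmul_eq_mul, mul_one] at this
    linarith [hee]
  have HS4R : SOut + SIn + (B.card : ℝ) * B.card ≤ 2 * eIn + B.card * n := by
    have hper : ∀ w ∈ B, (outDeg G w : ℝ) + (inDeg G w : ℝ) + (B.card : ℝ)
        ≤ ((B.filter fun x => G w x).card : ℝ) + ((B.filter fun x => G x w).card : ℝ) + n := by
      intro w hw; exact_mod_cast h4 w hw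
    have := Finset.sum_le_sum hper
    simp only [Finset.sum_add_distrib, Finset.sum_const, nsmul_eq_mul] at this
    linarith [hee]
  have HS5R : SIn + SOut + (B.card : ℝ) ≤ B.card * n := by
    have hper : ∀ w ∈ B, (inDeg G w : ℝ) + (outDeg G w : ℝ) + 1 ≤ (n : ℝ) := by
      intro w _; exact_mod_cast h2 w
    have := Finset.sum_le_sum hper
    simp only [Finset.sum_add_distrib, Finset.sum_const, nsmul_eq_mul, mul_one] at this
    linarith
  have hδa : (1/2 - c) * n ≤ (A.card : ℝ) := by
    have := (hdeg v).1; rwa [hacard] at this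
  have hδb : (1/2 - c) * n ≤ (B.card : ℝ) := by
    have := (hdeg v).2; rwa [hbcard] at this
  have hSInR : (B.card : ℝ) * ((1/2 - c) * n) ≤ SIn := by
    rw [hSIndef]
    calc (B.card : ℝ) * ((1/2 - c) * n) = ∑ _w ∈ B, (1/2 - c) * (n:ℝ) := by
          rw [Finset.sum_const, nsmul_eq_mul]
      _ ≤ ∑ w ∈ B, (inDeg G w : ℝ) := Finset.sum_le_sum fun w _ => (hdeg w).2
  have hSOutR : (B.card : ℝ) * ((1/2 - c) * n) ≤ SOut := by
    rw [hSOutdef]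
    calc (B.card : ℝ) * ((1/2 - c) * n) = ∑ _w ∈ B, (1/2 - c) * (n:ℝ) := by
          rw [Finset.sum_const, nsmul_eq_mul]
      _ ≤ ∑ w ∈ B, (outDeg G w : ℝ) := Finset.sum_le_sum fun w _ => (hdeg w).1
  have habnR : (A.card : ℝ) + B.card + 1 ≤ n := by exact_mod_cast habn
  rw [hcount, hNR]
  constructor
  · rcases le_or_gt c (1/6) with hc6 | hc6
    · exact lower_arith' c n ((1/2 - c) * n) A.card B.card NR SIn eIn rfl hc hc6
        HS1R HS3R hSInR hδa hδb habnR hnR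
    · have hNR0 : (0:ℝ) ≤ NR := by
        rw [hNRdef]; exact Finset.sum_nonneg fun w _ => Nat.cast_nonneg _
      nlinarith [sq_nonneg (n : ℝ)]
  · rcases le_or_gt c 1 with hc1 | hc1
    · exact upper_arith' c n ((1/2 - c) * n) B.card NR SIn SOut eIn rfl hc hc1
        HS2R HS4R HS5R hSOutR hbR
    · have hNab : NR ≤ (B.card : ℝ) * A.card := by
        rw [hNRdef]
        calc ∑ w ∈ B, ((A.filter fun u => G u w).card : ℝ)
            ≤ ∑ _w ∈ B, (A.card : ℝ) := Finset.sum_le_sum fun w _ =>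
              Nat.cast_le.2 (card_le_card (filter_subset _ _))
          _ = B.card * A.card := by rw [Finset.sum_const, nsmul_eq_mul]
      have ha0 : (0:ℝ) ≤ (A.card : ℝ) := Nat.cast_nonneg _
      exact upper_trivial' c n A.card B.card NR hc1 hNab habnR ha0 hbR
end

section
/- Let c > 0 and let G be an oriented graph on n vertices with minimum semidegree δ⁰(G) ≥ (1/2 - c)n. Then for every directed edge uv of G, the quantity d⁻'⁺(uv) - d⁺'⁻(uv) is between -4cn and 4cn, where d⁻'⁺(uv) = |N⁻(u) ∩ N⁺(v)| and d⁺'⁻(uv) = |N⁺(u) ∩ N⁻(v)|. -/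
open Finset
open scoped Classical

theorem stmt_2 (c : ℝ) (hc : 0 < c) (n : ℕ) (G : Fin n → Fin n → Prop)
    (hG : IsOriented G) (hdeg : MinSemidegreeGE G ((1/2 - c) * n)) :
    ∀ u v : Fin n, G u v →
      -(4 * c * n) ≤
          ((((univ : Finset (Fin n)).filter fun w => G w u ∧ G v w).card : ℝ) -
            (((univ : Finset (Fin n)).filter fun w => G u w ∧ G w v).card : ℝ)) ∧
      ((((univ : Finset (Fin n)).filter fun w => G w u ∧ G v w).card : ℝ) -
            (((univ : Finset (Fin n)).filter fun w => G u w ∧ G w v).card : ℝ)) ≤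
        4 * c * n := by
  intro u v _
  -- key counting lemma
  have aux : ∀ (H : Fin n → Fin n → Prop), IsOriented H → ∀ u v : Fin n,
      ((univ : Finset (Fin n)).filter fun w => H w u ∧ H v w).card
        + ((univ : Finset (Fin n)).filter fun w => H u w).card
        + ((univ : Finset (Fin n)).filter fun w => H w v).card
      ≤ n + ((univ : Finset (Fin n)).filter fun w => H u w ∧ H w v).card := by
    intro H hH u v
    set A := (univ : Finset (Fin n)).filter fun w => H w u ∧ H v w with hA
    set Ou := (univ : Finset (Fin n)).filter fun w => H u w with hOu
    set Iv := (univ : Finset (Fin n)).filter fun w => H w v with hIv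
    set B := (univ : Finset (Fin n)).filter fun w => H u w ∧ H w v with hB
    have hint : Ou ∩ Iv = B := by
      ext w; simp [hOu, hIv, hB]
    have hdisj : Disjoint A (Ou ∪ Iv) := by
      rw [Finset.disjoint_left]
      intro w hw hw'
      simp only [hA, Finset.mem_filter, Finset.mem_univ, true_and] at hw
      rcases Finset.mem_union.1 hw' with h | h
      · exact hH.2 w u hw.1 (by simpa [hOu] using h)
      · exact hH.2 v w hw.2 (by simpa [hIv] using h)
    have h1 : (Ou ∪ Iv).card + B.card = Ou.card + Iv.card := by
      rw [← hint]; exact Finset.card_union_add_card_inter Ou Iv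
    have h2 : (A ∪ (Ou ∪ Iv)).card ≤ n := by
      calc (A ∪ (Ou ∪ Iv)).card ≤ (univ : Finset (Fin n)).card :=
            Finset.card_le_card (Finset.subset_univ _)
        _ = n := by simp
    rw [Finset.card_union_of_disjoint hdisj] at h2
    omega
  have hG' : IsOriented (fun a b => G b a) := ⟨hG.1, fun a b h h' => hG.2 b a h h'⟩
  have k1 := aux G hG u v
  have k2 := aux (fun a b => G b a) hG' u v
  have du := (hdeg u).1
  have dv := (hdeg v).2
  have du' := (hdeg u).2
  have dv' := (hdeg v).1
  simp only [outDeg, inDeg, outDegOn, inDegOn] at du dv du' dv'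
  have hcn : 0 ≤ c * n := by positivity
  have k1' : (((univ : Finset (Fin n)).filter fun w => G w u ∧ G v w).card : ℝ)
        + (((univ : Finset (Fin n)).filter fun w => G u w).card : ℝ)
        + (((univ : Finset (Fin n)).filter fun w => G w v).card : ℝ)
      ≤ n + (((univ : Finset (Fin n)).filter fun w => G u w ∧ G w v).card : ℝ) := by
    exact_mod_cast k1
  have k2' : (((univ : Finset (Fin n)).filter fun w => G u w ∧ G w v).card : ℝ)
        + (((univ : Finset (Fin n)).filter fun w => G w u).card : ℝ)
        + (((univ : Finset (Fin n)).filter fun w => G v w).card : ℝ)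
      ≤ n + (((univ : Finset (Fin n)).filter fun w => G w u ∧ G v w).card : ℝ) := by
    exact_mod_cast k2
  constructor <;> nlinarith [k1', k2', du, dv, du', dv', hcn]
end

section
/- Let c > 0 and let G be an oriented graph on n vertices with minimum semidegree δ⁰(G) ≥ (1/2 - c)n. Then for every pair of disjoint vertex subsets A and B, the sum over all edges uv directed from A to B of the number of cyclic triangles containing both u and v is at least e⁺(A,B)²/(2|A|) - cn³. -/
open Finset
open scoped Classical

theorem stmt_3 (c : ℝ) (hc : 0 < c) (n : ℕ) (G : Fin n → Fin n → Prop)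
    (hG : IsOriented G) (hdeg : MinSemidegreeGE G ((1/2 - c) * n)) :
    ∀ A B : Finset (Fin n), Disjoint A B →
      (eOut G A B : ℝ)^2 / (2 * A.card) - c * n^3 ≤
        ∑ u ∈ A, ∑ v ∈ B.filter (fun v => G u v),
          (((univ : Finset (Fin n)).filter fun w => G w u ∧ G v w).card : ℝ) := by
  obtain ⟨hloop, hanti⟩ := hG
  intro A B hAB
  -- per-vertex (u) bound
  have keyU : ∀ u ∈ A,
      ((B.filter (fun v => G u v)).card : ℝ)^2 / 2
        - 2 * c * n * ((B.filter (fun v => G u v)).card : ℝ)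
      ≤ ∑ v ∈ B.filter (fun v => G u v),
          (((univ : Finset (Fin n)).filter fun w => G w u ∧ G v w).card : ℝ) := by
    intro u _
    set R := B.filter (fun v => G u v) with hR
    set k : ℕ := R.card with hk
    -- per-edge bound
    have hedge : ∀ v ∈ R,
        ((univ.filter (fun w => G v w)).card : ℝ)
          + ((univ.filter (fun w => G w u)).card : ℝ) + (k : ℝ) + 1 - n
          - ((R.filter (fun w => G v w)).card : ℝ)
        ≤ (((univ : Finset (Fin n)).filter fun w => G w u ∧ G v w).card : ℝ) := by
      intro v hv
      have huv : G u v := (mem_filter.mp hv).2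
      set P := univ.filter (fun w => G v w) with hP
      set Q := univ.filter (fun w => G w u) with hQ
      set Z := P \ (Q ∪ R ∪ {u}) with hZ
      set S := (univ : Finset (Fin n)).filter (fun w => G w u ∧ G v w) with hS
      have hQR : Disjoint Q (R ∪ ({u} ∪ Z)) := by
        rw [Finset.disjoint_left]
        intro w hwQ hw
        have hGwu : G w u := (mem_filter.mp hwQ).2
        rcases Finset.mem_union.mp hw with hw | hw
        · exact hanti _ _ hGwu (mem_filter.mp hw).2
        · rcases Finset.mem_union.mp hw with hw | hw
          · rw [Finset.mem_singleton] at hw; exact hloop u (hw ▸ hGwu)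
          · exact absurd (Finset.mem_union.mpr (Or.inl (Finset.mem_union.mpr (Or.inl hwQ)))) (Finset.mem_sdiff.mp hw).2
      have hRuZ : Disjoint R ({u} ∪ Z) := by
        rw [Finset.disjoint_left]
        intro w hwR hw
        rcases Finset.mem_union.mp hw with hw | hw
        · rw [Finset.mem_singleton] at hw
          exact hloop u (hw ▸ (mem_filter.mp hwR).2)
        · exact absurd (Finset.mem_union.mpr (Or.inl (Finset.mem_union.mpr (Or.inr hwR)))) (Finset.mem_sdiff.mp hw).2
      have huZ : Disjoint ({u} : Finset (Fin n)) Z := by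
        rw [Finset.disjoint_left]
        intro w hw hwZ
        rw [Finset.mem_singleton] at hw
        exact absurd (Finset.mem_union.mpr (Or.inr (hw ▸ Finset.mem_singleton_self u))) (Finset.mem_sdiff.mp hwZ).2
      have h1 : Q.card + k + 1 + Z.card ≤ n := by
        have hcards : (Q ∪ (R ∪ ({u} ∪ Z))).card = Q.card + (k + (1 + Z.card)) := by
          rw [Finset.card_union_of_disjoint hQR, Finset.card_union_of_disjoint hRuZ,
            Finset.card_union_of_disjoint huZ, Finset.card_singleton]
        have hle : (Q ∪ (R ∪ ({u} ∪ Z))).card ≤ n := by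
          have := Finset.card_le_univ (Q ∪ (R ∪ ({u} ∪ Z)))
          simpa using this
        omega
      have h2 : P.card ≤ S.card + (R.filter (fun w => G v w)).card + Z.card := by
        have hsub : P ⊆ S ∪ (R.filter (fun w => G v w)) ∪ Z := by
          intro w hw
          have hGvw : G v w := (mem_filter.mp hw).2
          by_cases hwu : G w u
          · exact Finset.mem_union.mpr (Or.inl (Finset.mem_union.mpr (Or.inl
              (mem_filter.mpr ⟨mem_univ _, hwu, hGvw⟩))))
          · by_cases hwR : w ∈ R
            · exact Finset.mem_union.mpr (Or.inl (Finset.mem_union.mpr (Or.inr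
                (mem_filter.mpr ⟨hwR, hGvw⟩))))
            · refine Finset.mem_union.mpr (Or.inr (Finset.mem_sdiff.mpr ⟨hw, ?_⟩))
              intro hmem
              rcases Finset.mem_union.mp hmem with hmem | hmem
              · rcases Finset.mem_union.mp hmem with hmem | hmem
                · exact hwu (mem_filter.mp hmem).2
                · exact hwR hmem
              · rw [Finset.mem_singleton] at hmem; subst hmem
                exact hanti _ _ huv hGvw
        calc P.card ≤ (S ∪ (R.filter (fun w => G v w)) ∪ Z).card := Finset.card_le_card hsub
          _ ≤ (S ∪ (R.filter (fun w => G v w))).card + Z.card := Finset.card_union_le _ _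
          _ ≤ S.card + (R.filter (fun w => G v w)).card + Z.card := by
              exact Nat.add_le_add_right (Finset.card_union_le _ _) _
      have hn : P.card + Q.card + k + 1 ≤ S.card + (R.filter (fun w => G v w)).card + n := by
        omega
      have := Nat.cast_le (α := ℝ) |>.mpr hn
      push_cast at this
      linarith
    -- bound on edges inside R
    have hpair : 2 * (∑ v ∈ R, (R.filter (fun w => G v w)).card) + k ≤ k * k := by
      have hpoint : ∀ v ∈ R, ∀ w ∈ R,
          ((if G v w then 1 else 0) + (if G w v then 1 else 0) + (if v = w then 1 else 0)) ≤ 1 := by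
        intro v _ w _
        rcases eq_or_ne v w with rfl | hvw
        · simp [hloop v]
        · by_cases h1 : G v w
          · have h2 : ¬ G w v := hanti _ _ h1
            simp [h1, h2, hvw]
          · by_cases h2 : G w v <;> simp [h1, h2, hvw]
      have hsum : ∑ v ∈ R, ∑ w ∈ R,
          ((if G v w then 1 else 0) + (if G w v then 1 else 0) + (if v = w then 1 else 0))
          ≤ ∑ v ∈ R, ∑ w ∈ R, 1 := by
        refine Finset.sum_le_sum fun v hv => Finset.sum_le_sum fun w hw => hpoint v hv w hw
      have e1 : ∑ v ∈ R, ∑ w ∈ R, (if G v w then 1 else 0)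
          = ∑ v ∈ R, (R.filter (fun w => G v w)).card := by
        refine Finset.sum_congr rfl fun v _ => ?_
        rw [Finset.card_filter]
      have e2 : ∑ v ∈ R, ∑ w ∈ R, (if G w v then 1 else 0)
          = ∑ v ∈ R, (R.filter (fun w => G v w)).card := by
        rw [Finset.sum_comm]
        refine Finset.sum_congr rfl fun v _ => ?_
        rw [Finset.card_filter]
      have e3 : ∑ v ∈ R, ∑ w ∈ R, (if v = w then 1 else 0) = k := by
        have hinner : ∀ v ∈ R, ∑ w ∈ R, (if v = w then 1 else 0) = 1 := by
          intro v hv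
          simp [Finset.sum_ite_eq, hv]
        rw [Finset.sum_congr rfl hinner]
        simp [hk]
      have hRHS : ∑ v ∈ R, ∑ w ∈ R, (1 : ℕ) = k * k := by simp [hk, mul_comm]
      simp only [Finset.sum_add_distrib] at hsum
      rw [e1, e2, e3, hRHS] at hsum
      omega
    -- degree bounds
    have hQdeg : (1/2 - c) * n ≤ ((univ.filter (fun w => G w u)).card : ℝ) := by
      have := (hdeg u).2
      simpa [inDeg, inDegOn] using this
    have hPdeg : ∀ v : Fin n, (1/2 - c) * n ≤ ((univ.filter (fun w => G v w)).card : ℝ) := by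
      intro v
      have := (hdeg v).1
      simpa [outDeg, outDegOn] using this
    have hsum1 : ∑ v ∈ R, ((1/2 - c) * n + (1/2 - c) * n + (k:ℝ) + 1 - n
          - ((R.filter (fun w => G v w)).card : ℝ))
        ≤ ∑ v ∈ R, (((univ : Finset (Fin n)).filter fun w => G w u ∧ G v w).card : ℝ) := by
      refine Finset.sum_le_sum fun v hv => ?_
      have h := hedge v hv
      have hp := hPdeg v
      linarith [hQdeg]
    have hsplit : ∑ v ∈ R, ((1/2 - c) * n + (1/2 - c) * n + (k:ℝ) + 1 - n
          - ((R.filter (fun w => G v w)).card : ℝ))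
        = (k:ℝ) * ((1/2 - c) * n + (1/2 - c) * n + (k:ℝ) + 1 - n)
          - ∑ v ∈ R, ((R.filter (fun w => G v w)).card : ℝ) := by
      rw [Finset.sum_sub_distrib, Finset.sum_const, nsmul_eq_mul, hk]
    have hpairR : (∑ v ∈ R, ((R.filter (fun w => G v w)).card : ℝ)) ≤ ((k:ℝ)*k - k)/2 := by
      have h := Nat.cast_le (α := ℝ) |>.mpr hpair
      push_cast at h
      linarith
    rw [hsplit] at hsum1
    have hk0 : (0:ℝ) ≤ (k:ℝ) := Nat.cast_nonneg k
    nlinarith [hsum1, hpairR]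
  -- now sum over u ∈ A
  have htot : ∑ u ∈ A, (((B.filter (fun v => G u v)).card : ℝ)^2 / 2
        - 2 * c * n * ((B.filter (fun v => G u v)).card : ℝ))
      ≤ ∑ u ∈ A, ∑ v ∈ B.filter (fun v => G u v),
          (((univ : Finset (Fin n)).filter fun w => G w u ∧ G v w).card : ℝ) :=
    Finset.sum_le_sum keyU
  have hsplit2 : ∑ u ∈ A, (((B.filter (fun v => G u v)).card : ℝ)^2 / 2
        - 2 * c * n * ((B.filter (fun v => G u v)).card : ℝ))
      = (∑ u ∈ A, ((B.filter (fun v => G u v)).card : ℝ)^2) / 2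
        - 2 * c * n * (∑ u ∈ A, ((B.filter (fun v => G u v)).card : ℝ)) := by
    rw [Finset.sum_sub_distrib, Finset.sum_div, Finset.mul_sum]
  have he : (eOut G A B : ℝ) = ∑ u ∈ A, ((B.filter (fun v => G u v)).card : ℝ) := by
    simp [eOut, outDegOn]
  have hCS : (∑ u ∈ A, ((B.filter (fun v => G u v)).card : ℝ))^2
      ≤ (A.card : ℝ) * ∑ u ∈ A, ((B.filter (fun v => G u v)).card : ℝ)^2 :=
    sq_sum_le_card_mul_sum_sq
  -- e ≤ n^2/4
  have hab : A.card + B.card ≤ n := by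
    have h1 : (A ∪ B).card = A.card + B.card := Finset.card_union_of_disjoint hAB
    have h2 : (A ∪ B).card ≤ n := by simpa using Finset.card_le_univ (A ∪ B)
    omega
  have heAB : eOut G A B ≤ A.card * B.card := by
    have : ∀ a ∈ A, outDegOn G a B ≤ B.card := fun a _ => Finset.card_filter_le _ _
    calc eOut G A B ≤ ∑ _a ∈ A, B.card := Finset.sum_le_sum this
      _ = A.card * B.card := by rw [Finset.sum_const, smul_eq_mul]
  have habR : ((A.card : ℝ)) + (B.card : ℝ) ≤ (n:ℝ) := by exact_mod_cast hab
  have heABR : (eOut G A B : ℝ) ≤ (A.card : ℝ) * (B.card : ℝ) := by exact_mod_cast heAB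
  have h4eR : 4 * (eOut G A B : ℝ) ≤ (n:ℝ) * n := by
    nlinarith [sq_nonneg ((A.card:ℝ) - (B.card:ℝ)), Nat.cast_nonneg (α := ℝ) A.card,
      Nat.cast_nonneg (α := ℝ) B.card]
  have hE0 : (0:ℝ) ≤ (eOut G A B : ℝ) := Nat.cast_nonneg _
  have hn0 : (0:ℝ) ≤ (n:ℝ) := Nat.cast_nonneg _
  have hcn : 2 * c * n * (eOut G A B : ℝ) ≤ c * n^3 := by
    have hkey : 0 ≤ c * n * ((n:ℝ) * n - 4 * (eOut G A B : ℝ)) :=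
      mul_nonneg (mul_nonneg hc.le hn0) (by linarith)
    nlinarith [mul_nonneg (mul_nonneg (mul_nonneg hc.le hn0) hn0) hn0]
  rcases Nat.eq_zero_or_pos A.card with hA0 | hApos
  · have hAe : A = ∅ := Finset.card_eq_zero.mp hA0
    subst hAe
    simp only [Finset.sum_empty, eOut, outDegOn]
    norm_num
    positivity
  · have hAposR : (0:ℝ) < (A.card : ℝ) := by exact_mod_cast hApos
    have h3 : (eOut G A B : ℝ)^2 / (2 * (A.card:ℝ))
        ≤ (∑ u ∈ A, ((B.filter (fun v => G u v)).card : ℝ)^2) / 2 := by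
      rw [div_le_div_iff₀ (by positivity) (by norm_num)]
      rw [he]
      nlinarith [hCS]
    rw [hsplit2] at htot
    rw [he] at hcn
    linarith
end

section
/- Suppose n is a multiple of 3, G is a tournament on n = 3m vertices, and the vertex set of G admits a partition {V₁, V₂, V₃} with |V₁| = m-1, |V₂| = m, |V₃| = m+1 such that no edges are directed from V₂ to V₁, from V₃ to V₂, or from V₁ to V₃. Then G has no cyclic triangle factor. -/
open Finset
open scoped Classical

theorem stmt_4 (m n : ℕ) (hm : 1 ≤ m) (hn : n = 3 * m)
    (G : Fin n → Fin n → Prop) (hG : IsOriented G)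
    (htour : ∀ u v : Fin n, u ≠ v → G u v ∨ G v u)
    (V1 V2 V3 : Finset (Fin n))
    (h12 : Disjoint V1 V2) (h13 : Disjoint V1 V3) (h23 : Disjoint V2 V3)
    (hcover : V1 ∪ V2 ∪ V3 = univ)
    (hc1 : V1.card = m - 1) (hc2 : V2.card = m) (hc3 : V3.card = m + 1)
    (e21 : ∀ x ∈ V2, ∀ y ∈ V1, ¬ G x y)
    (e32 : ∀ x ∈ V3, ∀ y ∈ V2, ¬ G x y)
    (e13 : ∀ x ∈ V1, ∀ y ∈ V3, ¬ G x y) :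
    ¬ ∃ C : Finset (Finset (Fin n)), IsCycFactor G C := by
  rintro ⟨C, ⟨⟨htri, hdisj⟩, hcov⟩⟩
  classical
  set f : Fin n → ZMod 3 := fun v => if v ∈ V1 then 0 else if v ∈ V2 then 1 else 2 with hf
  have fv1 : ∀ v ∈ V1, f v = 0 := fun v hv => by simp [hf, hv]
  have fv2 : ∀ v ∈ V2, f v = 1 := fun v hv => by
    simp [hf, hv, Finset.disjoint_right.mp h12 hv]
  have fv3 : ∀ v ∈ V3, f v = 2 := fun v hv => by
    simp [hf, Finset.disjoint_right.mp h13 hv, Finset.disjoint_right.mp h23 hv]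
  have hpart : ∀ v : Fin n, v ∈ V1 ∨ v ∈ V2 ∨ v ∈ V3 := by
    intro v
    have : v ∈ V1 ∪ V2 ∪ V3 := by rw [hcover]; exact Finset.mem_univ v
    simpa [Finset.mem_union, or_assoc] using this
  -- each triangle sums to 0
  have key : ∀ s ∈ C, ∑ v ∈ s, f v = 0 := by
    intro s hs
    obtain ⟨a, b, c, hab, hbc, hca, rfl⟩ := htri s hs
    have hab' : a ≠ b := fun h => hG.1 a (h ▸ hab)
    have hbc' : b ≠ c := fun h => hG.1 b (h ▸ hbc)
    have hac' : a ≠ c := fun h => hG.2 a b hab (by rw [h]; exact h ▸ hbc)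
    have hsum : ∑ v ∈ ({a, b, c} : Finset (Fin n)), f v = f a + f b + f c := by
      rw [Finset.sum_insert (by simp [hab', hac']), Finset.sum_pair hbc', add_assoc]
    rw [hsum]
    rcases hpart a with ha | ha | ha <;> rcases hpart b with hb | hb | hb <;>
      rcases hpart c with hc | hc | hc <;>
      first
      | exact absurd hab (e21 a ha b hb)
      | exact absurd hab (e32 a ha b hb)
      | exact absurd hab (e13 a ha b hb)
      | exact absurd hbc (e21 b hb c hc)
      | exact absurd hbc (e32 b hb c hc)
      | exact absurd hbc (e13 b hb c hc)
      | exact absurd hca (e21 c hc a ha)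
      | exact absurd hca (e32 c hc a ha)
      | exact absurd hca (e13 c hc a ha)
      | (rw [fv1 a ha, fv1 b hb, fv1 c hc]; decide)
      | (rw [fv2 a ha, fv2 b hb, fv2 c hc]; decide)
      | (rw [fv3 a ha, fv3 b hb, fv3 c hc]; decide)
      | (rw [fv1 a ha, fv2 b hb, fv3 c hc]; decide)
      | (rw [fv2 a ha, fv3 b hb, fv1 c hc]; decide)
      | (rw [fv3 a ha, fv1 b hb, fv2 c hc]; decide)
  -- total sum via the factor
  have hzero : ∑ v, f v = 0 := by
    rw [← hcov, Finset.sum_biUnion]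
    · exact Finset.sum_eq_zero key
    · intro s hs t ht hst
      exact hdisj s hs t ht hst
  -- total sum via the partition
  have h123 : Disjoint (V1 ∪ V2) V3 := Finset.disjoint_union_left.mpr ⟨h13, h23⟩
  have hval : ∑ v, f v = (2 : ZMod 3) := by
    rw [← hcover, Finset.sum_union h123, Finset.sum_union h12]
    rw [Finset.sum_eq_zero fv1, Finset.sum_congr rfl fv2, Finset.sum_congr rfl fv3]
    simp only [Finset.sum_const, hc2, hc3, nsmul_eq_mul]
    push_cast
    ring_nf
    have h0 : (m : ZMod 3) * 3 = 0 := by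
      have h3 : (3 : ZMod 3) = 0 := rfl
      rw [h3, mul_zero]
    rw [h0, add_zero]
  rw [hzero] at hval
  exact absurd hval.symm (by decide)
end

section
/- Let G be an oriented graph on n vertices with a divisibility barrier partition {V₁, V₂, V₃}: no edges are directed from V₂ to V₁, from V₃ to V₂, or from V₁ to V₃, and the sizes |V₁|, |V₂|, |V₃| are not all congruent modulo 3. Then G has no cyclic triangle factor. -/
open Finset
open scoped Classical

set_option maxHeartbeats 1000000 in
theorem stmt_5 (n : ℕ) (G : Fin n → Fin n → Prop) (hG : IsOriented G)
    (V1 V2 V3 : Finset (Fin n))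
    (h12 : Disjoint V1 V2) (h13 : Disjoint V1 V3) (h23 : Disjoint V2 V3)
    (hcover : V1 ∪ V2 ∪ V3 = univ)
    (e21 : ∀ x ∈ V2, ∀ y ∈ V1, ¬ G x y)
    (e32 : ∀ x ∈ V3, ∀ y ∈ V2, ¬ G x y)
    (e13 : ∀ x ∈ V1, ∀ y ∈ V3, ¬ G x y)
    (hmod : ¬ (V1.card % 3 = V2.card % 3 ∧ V2.card % 3 = V3.card % 3)) :
    ¬ ∃ C : Finset (Finset (Fin n)), IsCycFactor G C := by
  rintro ⟨C, ⟨⟨hct, hdisj⟩, hcov⟩⟩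
  -- each vertex lies in exactly one part
  have part : ∀ v : Fin n, (v ∈ V1 ∧ v ∉ V2 ∧ v ∉ V3) ∨ (v ∉ V1 ∧ v ∈ V2 ∧ v ∉ V3) ∨
      (v ∉ V1 ∧ v ∉ V2 ∧ v ∈ V3) := by
    intro v
    have hv : v ∈ V1 ∪ V2 ∪ V3 := by rw [hcover]; exact mem_univ v
    simp only [mem_union] at hv
    have d12 := Finset.disjoint_left.mp h12
    have d13 := Finset.disjoint_left.mp h13
    have d23 := Finset.disjoint_left.mp h23
    tauto
  -- per-triangle congruences
  have tri : ∀ s, IsCycTri G s →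
      (((V1 ∩ s).card : ZMod 3) = ((V2 ∩ s).card : ZMod 3) ∧
       ((V2 ∩ s).card : ZMod 3) = ((V3 ∩ s).card : ZMod 3)) := by
    rintro s ⟨a, b, c, hab, hbc, hca, rfl⟩
    have hne1 : a ≠ b := by rintro rfl; exact hG.1 _ hab
    have hne2 : b ≠ c := by rintro rfl; exact hG.1 _ hbc
    have hne3 : c ≠ a := by rintro rfl; exact hG.1 _ hca
    have hcard : ∀ V : Finset (Fin n), (V ∩ ({a, b, c} : Finset (Fin n))).card =
        (if a ∈ V then 1 else 0) + ((if b ∈ V then 1 else 0) + (if c ∈ V then 1 else 0)) := by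
      intro V
      rw [Finset.inter_comm, ← Finset.filter_mem_eq_inter, Finset.card_filter,
        Finset.sum_insert (by simp [hne1, hne3.symm]),
        Finset.sum_insert (by simp [hne2]), Finset.sum_singleton]
    rcases part a with ⟨ha1, ha2, ha3⟩ | ⟨ha1, ha2, ha3⟩ | ⟨ha1, ha2, ha3⟩ <;>
      rcases part b with ⟨hb1, hb2, hb3⟩ | ⟨hb1, hb2, hb3⟩ | ⟨hb1, hb2, hb3⟩ <;>
      rcases part c with ⟨hc1, hc2, hc3⟩ | ⟨hc1, hc2, hc3⟩ | ⟨hc1, hc2, hc3⟩ <;>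
      first
        | exact absurd hab (e21 _ ‹_› _ ‹_›)
        | exact absurd hbc (e21 _ ‹_› _ ‹_›)
        | exact absurd hca (e21 _ ‹_› _ ‹_›)
        | exact absurd hab (e32 _ ‹_› _ ‹_›)
        | exact absurd hbc (e32 _ ‹_› _ ‹_›)
        | exact absurd hca (e32 _ ‹_› _ ‹_›)
        | exact absurd hab (e13 _ ‹_› _ ‹_›)
        | exact absurd hbc (e13 _ ‹_› _ ‹_›)
        | exact absurd hca (e13 _ ‹_› _ ‹_›)
        | (refine ⟨?_, ?_⟩ <;> rw [hcard, hcard] <;>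
            simp [ha1, ha2, ha3, hb1, hb2, hb3, hc1, hc2, hc3] <;> decide)
  -- counting
  have hsum : ∀ V : Finset (Fin n), V.card = ∑ s ∈ C, (V ∩ s).card := by
    intro V
    have hV : V = C.biUnion fun s => V ∩ s := by
      ext v
      simp only [Finset.mem_biUnion, Finset.mem_inter]
      constructor
      · intro hv
        have : v ∈ C.biUnion id := by rw [hcov]; exact mem_univ v
        simp only [Finset.mem_biUnion, id] at this
        obtain ⟨s, hs, hvs⟩ := this
        exact ⟨s, hs, hv, hvs⟩
      · rintro ⟨s, _, hv, _⟩; exact hv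
    conv_lhs => rw [hV]
    exact Finset.card_biUnion fun s hs t ht hst =>
      (hdisj s hs t ht hst).mono inter_subset_right inter_subset_right
  have key : (V1.card : ZMod 3) = (V2.card : ZMod 3) ∧
      (V2.card : ZMod 3) = (V3.card : ZMod 3) := by
    rw [hsum V1, hsum V2, hsum V3]
    push_cast
    constructor
    · exact Finset.sum_congr rfl fun s hs => (tri s (hct s hs)).1
    · exact Finset.sum_congr rfl fun s hs => (tri s (hct s hs)).2
  exact hmod ⟨(ZMod.natCast_eq_natCast_iff' _ _ _).mp key.1,
    (ZMod.natCast_eq_natCast_iff' _ _ _).mp key.2⟩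
end

section
/- Let n be divisible by 3 and let G be an oriented graph on n vertices with minimum semidegree δ⁰(G) ≥ n/2 - 1. Suppose {V₁, V₂, V₃} is a partition of V(G) such that no edges are directed from V₂ to V₁, from V₃ to V₂, or from V₁ to V₃. Then |V₁| ≡ |V₂| ≡ |V₃| (mod 3), i.e., this partition is not a divisibility barrier. (In particular G with these hypotheses has no divisibility barrier.) -/
open Finset
open scoped Classical

/-- In an oriented graph, the sum over `A` of out-degrees into `A` equals the sum of
in-degrees into `A` (double counting edges within `A`). -/
lemma aux_sum_out_eq_sum_in {n : ℕ} (G : Fin n → Fin n → Prop) (A : Finset (Fin n)) :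
    ∑ v ∈ A, outDegOn G v A = ∑ v ∈ A, inDegOn G v A := by
  unfold outDegOn inDegOn
  simp_rw [Finset.card_filter]
  exact Finset.sum_comm

lemma aux_out_add_in {n : ℕ} (G : Fin n → Fin n → Prop) (hG : IsOriented G)
    (A : Finset (Fin n)) (v : Fin n) (hv : v ∈ A) :
    outDegOn G v A + inDegOn G v A + 1 ≤ A.card := by
  have hdisj : Disjoint (A.filter fun u => G v u) (A.filter fun u => G u v) := by
    rw [Finset.disjoint_left]
    intro u hu hu'
    exact hG.2 v u (Finset.mem_filter.mp hu).2 (Finset.mem_filter.mp hu').2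
  have hsub : (A.filter fun u => G v u) ∪ (A.filter fun u => G u v) ⊆ A.erase v := by
    intro u hu
    rcases Finset.mem_union.mp hu with h | h
    · rcases Finset.mem_filter.mp h with ⟨hA, hGvu⟩
      refine Finset.mem_erase.mpr ⟨?_, hA⟩
      rintro rfl; exact hG.1 _ hGvu
    · rcases Finset.mem_filter.mp h with ⟨hA, hGuv⟩
      refine Finset.mem_erase.mpr ⟨?_, hA⟩
      rintro rfl; exact hG.1 _ hGuv
  have h1 : outDegOn G v A + inDegOn G v A ≤ (A.erase v).card := by
    rw [outDegOn, inDegOn, ← Finset.card_union_of_disjoint hdisj]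
    exact Finset.card_le_card hsub
  have h2 : (A.erase v).card = A.card - 1 := Finset.card_erase_of_mem hv
  have h3 : 1 ≤ A.card := Finset.card_pos.mpr ⟨v, hv⟩
  omega

/-- Some vertex of `A` has within-`A` out-degree at most `(|A|-1)/2`. -/
lemma aux_exists_small_out {n : ℕ} (G : Fin n → Fin n → Prop) (hG : IsOriented G)
    (A : Finset (Fin n)) (hA : A.Nonempty) :
    ∃ v ∈ A, 2 * outDegOn G v A + 1 ≤ A.card := by
  by_contra hcon
  push_neg at hcon
  have hbig : ∀ v ∈ A, A.card ≤ 2 * outDegOn G v A := fun v hv => by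
    have := hcon v hv; omega
  have h1 : A.card * A.card ≤ ∑ v ∈ A, 2 * outDegOn G v A := by
    calc A.card * A.card = ∑ _v ∈ A, A.card := by rw [Finset.sum_const, smul_eq_mul]
    _ ≤ ∑ v ∈ A, 2 * outDegOn G v A := Finset.sum_le_sum hbig
  have h2 : ∑ v ∈ A, 2 * outDegOn G v A
      = ∑ v ∈ A, (outDegOn G v A + inDegOn G v A) := by
    rw [Finset.sum_add_distrib, ← aux_sum_out_eq_sum_in G A]
    simp [two_mul, Finset.sum_add_distrib]
  have h3 : ∑ v ∈ A, (outDegOn G v A + inDegOn G v A) ≤ ∑ _v ∈ A, (A.card - 1) := by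
    refine Finset.sum_le_sum fun v hv => ?_
    have := aux_out_add_in G hG A v hv; omega
  have h4 : ∑ _v ∈ A, (A.card - 1) = A.card * (A.card - 1) := by
    rw [Finset.sum_const, smul_eq_mul]
  have h5 : 1 ≤ A.card := Finset.card_pos.mpr hA
  have h6 : A.card * A.card ≤ A.card * (A.card - 1) := by omega
  have h7 : A.card ≤ A.card - 1 := Nat.le_of_mul_le_mul_left h6 (by omega)
  omega

/-- Key lemma: if all out-neighbours of vertices of a nonempty set `A` lie in `A ∪ B`,
then `n ≤ |A| + 2|B| + 1`. -/
lemma aux_key {n : ℕ} (G : Fin n → Fin n → Prop) (hG : IsOriented G)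
    (hdeg : ∀ v, n ≤ 2 * outDeg G v + 2)
    (A B : Finset (Fin n)) (hA : A.Nonempty)
    (hout : ∀ v ∈ A, ∀ u, G v u → u ∈ A ∨ u ∈ B) :
    n ≤ A.card + 2 * B.card + 1 := by
  obtain ⟨v, hv, hsmall⟩ := aux_exists_small_out G hG A hA
  have hsub : (univ.filter fun u => G v u) ⊆ (A.filter fun u => G v u) ∪ B := by
    intro u hu
    have hGvu := (Finset.mem_filter.mp hu).2
    rcases hout v hv u hGvu with h | h
    · exact Finset.mem_union_left _ (Finset.mem_filter.mpr ⟨h, hGvu⟩)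
    · exact Finset.mem_union_right _ h
  have hdegle : outDeg G v ≤ outDegOn G v A + B.card := by
    calc outDeg G v ≤ ((A.filter fun u => G v u) ∪ B).card :=
      Finset.card_le_card hsub
    _ ≤ outDegOn G v A + B.card := Finset.card_union_le _ _
  have := hdeg v
  omega

lemma aux_flip_oriented {n : ℕ} (G : Fin n → Fin n → Prop) (hG : IsOriented G) :
    IsOriented (fun u v => G v u) :=
  ⟨hG.1, fun u v h h' => hG.2 v u h h'⟩

lemma aux_flip_outDeg {n : ℕ} (G : Fin n → Fin n → Prop) (v : Fin n) :
    outDeg (fun u v => G v u) v = inDeg G v := by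
  simp only [outDeg, inDeg, outDegOn, inDegOn]

theorem stmt_6 (n : ℕ) (hn : 3 ∣ n) (G : Fin n → Fin n → Prop) (hG : IsOriented G)
    (hdeg : MinSemidegreeGE G ((n : ℝ)/2 - 1))
    (V1 V2 V3 : Finset (Fin n))
    (h12 : Disjoint V1 V2) (h13 : Disjoint V1 V3) (h23 : Disjoint V2 V3)
    (hcover : V1 ∪ V2 ∪ V3 = univ)
    (e21 : ∀ x ∈ V2, ∀ y ∈ V1, ¬ G x y)
    (e32 : ∀ x ∈ V3, ∀ y ∈ V2, ¬ G x y)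
    (e13 : ∀ x ∈ V1, ∀ y ∈ V3, ¬ G x y) :
    V1.card % 3 = V2.card % 3 ∧ V2.card % 3 = V3.card % 3 := by
  -- integer form of the degree hypothesis
  have hout : ∀ v, n ≤ 2 * outDeg G v + 2 := by
    intro v
    have h := (hdeg v).1
    have : (n : ℝ) ≤ 2 * (outDeg G v : ℝ) + 2 := by linarith
    exact_mod_cast this
  have hin : ∀ v, n ≤ 2 * outDeg (fun u v => G v u) v + 2 := by
    intro v
    rw [aux_flip_outDeg]
    have h := (hdeg v).2
    have : (n : ℝ) ≤ 2 * (inDeg G v : ℝ) + 2 := by linarith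
    exact_mod_cast this
  have hGf := aux_flip_oriented G hG
  -- membership splitting
  have hmem : ∀ u : Fin n, u ∈ V1 ∨ u ∈ V2 ∨ u ∈ V3 := by
    intro u
    have : u ∈ V1 ∪ V2 ∪ V3 := by rw [hcover]; exact Finset.mem_univ u
    simpa [Finset.mem_union, or_assoc] using this
  -- total count
  have htot : V1.card + V2.card + V3.card = n := by
    have h1 : (V1 ∪ V2 ∪ V3).card = n := by rw [hcover, Finset.card_univ, Fintype.card_fin]
    rw [Finset.card_union_of_disjoint, Finset.card_union_of_disjoint h12] at h1
    · exact h1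
    · rw [Finset.disjoint_union_left]; exact ⟨h13, h23⟩
  -- the six conditional inequalities
  have f1 : V1.card = 0 ∨ (n ≤ V1.card + 2 * V2.card + 1 ∧ n ≤ V1.card + 2 * V3.card + 1) := by
    rcases V1.eq_empty_or_nonempty with h | h
    · left; simp [h]
    · right
      constructor
      · refine aux_key G hG hout V1 V2 h fun v hv u hGvu => ?_
        rcases hmem u with h' | h' | h'
        · exact Or.inl h'
        · exact Or.inr h'
        · exact absurd hGvu (e13 v hv u h')
      · refine aux_key _ hGf hin V1 V3 h fun v hv u hGuv => ?_
        rcases hmem u with h' | h' | h'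
        · exact Or.inl h'
        · exact absurd hGuv (e21 u h' v hv)
        · exact Or.inr h'
  have f2 : V2.card = 0 ∨ (n ≤ V2.card + 2 * V3.card + 1 ∧ n ≤ V2.card + 2 * V1.card + 1) := by
    rcases V2.eq_empty_or_nonempty with h | h
    · left; simp [h]
    · right
      constructor
      · refine aux_key G hG hout V2 V3 h fun v hv u hGvu => ?_
        rcases hmem u with h' | h' | h'
        · exact absurd hGvu (e21 v hv u h')
        · exact Or.inl h'
        · exact Or.inr h'
      · refine aux_key _ hGf hin V2 V1 h fun v hv u hGuv => ?_
        rcases hmem u with h' | h' | h'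
        · exact Or.inr h'
        · exact Or.inl h'
        · exact absurd hGuv (e32 u h' v hv)
  have f3 : V3.card = 0 ∨ (n ≤ V3.card + 2 * V1.card + 1 ∧ n ≤ V3.card + 2 * V2.card + 1) := by
    rcases V3.eq_empty_or_nonempty with h | h
    · left; simp [h]
    · right
      constructor
      · refine aux_key G hG hout V3 V1 h fun v hv u hGvu => ?_
        rcases hmem u with h' | h' | h'
        · exact Or.inr h'
        · exact absurd hGvu (e32 v hv u h')
        · exact Or.inl h'
      · refine aux_key _ hGf hin V3 V2 h fun v hv u hGuv => ?_
        rcases hmem u with h' | h' | h'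
        · exact absurd hGuv (e13 u h' v hv)
        · exact Or.inr h'
        · exact Or.inl h'
  rcases f1 with h1 | ⟨h1a, h1b⟩ <;> rcases f2 with h2 | ⟨h2a, h2b⟩ <;>
    rcases f3 with h3 | ⟨h3a, h3b⟩ <;>
    first
      | omega
      | (have heq : V1.card = V2.card ∧ V2.card = V3.card := by omega
         omega)
end

section
/- Let 0 < 1/n ≪ α, c ≪ ξ ≪ η < 1 and let G be an oriented graph on n vertices with δ⁰(G) ≥ (1/2 - c)n. For every partition {A, B, C} of V(G) with |A| ≥ ηn, cyc(A) ≤ αn³, and cyc(A,A,C) ≤ αn³, there exist disjoint subsets C⁺ and C⁻ of C such that e⁻(A,C⁺) ≤ ξn², e⁺(A,C⁻) ≤ ξn², and |C⁺|, |C⁻| ≥ |C|/2 + (|A|-|B|)/2 - ξn. -/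
open Finset
open scoped Classical

section Helpers

variable {n : ℕ} {G : Fin n → Fin n → Prop}

/-- double counting of edges between two finsets -/
lemma double_count (G : Fin n → Fin n → Prop) (X Y : Finset (Fin n)) :
    ∑ x ∈ X, (Y.filter fun y => G x y).card = ∑ y ∈ Y, (X.filter fun x => G x y).card := by
  simp only [Finset.card_filter]
  exact Finset.sum_comm

lemma eOut_eq_sum_inDegOn (G : Fin n → Fin n → Prop) (X Y : Finset (Fin n)) :
    eOut G X Y = ∑ y ∈ Y, inDegOn G y X := by
  unfold eOut outDegOn inDegOn
  exact double_count G X Y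

/-- number of edges inside a set of an oriented graph -/
lemma oriented_inner_bound (hor : IsOriented G) (I : Finset (Fin n)) :
    2 * (∑ u ∈ I, (I.filter fun w => G u w).card) ≤ I.card * I.card - I.card := by
  classical
  set E : Finset (Fin n × Fin n) := (I ×ˢ I).filter (fun p => G p.1 p.2) with hE
  have hcard : ∑ u ∈ I, (I.filter fun w => G u w).card = E.card := by
    rw [hE, Finset.card_filter, Finset.sum_product]
    simp only [Finset.card_filter]
  have hsub : E ⊆ I.offDiag := by
    intro p hp
    rw [hE, Finset.mem_filter, Finset.mem_product] at hp
    rw [Finset.mem_offDiag]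
    exact ⟨hp.1.1, hp.1.2, fun h => hor.1 p.1 (h ▸ hp.2)⟩
  have hswap : (E.image Prod.swap).card = E.card := Finset.card_image_of_injective _ Prod.swap_injective
  have hsub2 : E.image Prod.swap ⊆ I.offDiag := by
    intro p hp
    obtain ⟨q, hq, rfl⟩ := Finset.mem_image.mp hp
    have := hsub hq
    rw [Finset.mem_offDiag] at this ⊢
    exact ⟨this.2.1, this.1, fun h => this.2.2 h.symm⟩
  have hdisj : Disjoint E (E.image Prod.swap) := by
    rw [Finset.disjoint_left]
    intro p hp hp2
    obtain ⟨q, hq, hqe⟩ := Finset.mem_image.mp hp2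
    rw [hE, Finset.mem_filter] at hp hq
    exact hor.2 _ _ hp.2 (by rw [← hqe]; exact hq.2)
  have hunion : (E ∪ E.image Prod.swap).card ≤ I.offDiag.card :=
    Finset.card_le_card (Finset.union_subset hsub hsub2)
  rw [Finset.card_union_of_disjoint hdisj, hswap] at hunion
  rw [hcard]
  have := Finset.offDiag_card I
  omega

end Helpers

section LemM

variable {n : ℕ} {G : Fin n → Fin n → Prop}

lemma card_filter_prod (X Y : Finset (Fin n)) (P : Fin n → Fin n → Prop) :
    ((X ×ˢ Y).filter (fun p => P p.1 p.2)).card = ∑ x ∈ X, (Y.filter fun y => P x y).card := by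
  rw [Finset.card_filter, Finset.sum_product]
  simp only [Finset.card_filter]

lemma core_step (hor : IsOriented G) (p Q qmin : ℕ)
    (hNA : ∀ v : Fin n, ∀ F : Finset (Fin n),
      (F.filter fun x => x ≠ v ∧ ¬ G v x ∧ ¬ G x v).card ≤ p)
    (hq : ∀ t : ℕ, qmin ≤ t → 2*Q + (t*t - t) + 2*(p*t) ≤ 2*(t*t))
    (W : Finset (Fin n)) (hne : W.Nonempty)
    (hdeg : ∀ v ∈ W, qmin ≤ (W.filter fun u => G u v).card) :
    ∃ v ∈ W, Q + cycIn G (W.erase v) ≤ cycIn G W := by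
  classical
  obtain ⟨v, hvW, hvmin⟩ := Finset.exists_min_image W (fun v => (W.filter fun u => G u v).card) hne
  refine ⟨v, hvW, ?_⟩
  set I : Finset (Fin n) := W.filter (fun u => G u v) with hI
  set O : Finset (Fin n) := W.filter (fun u => G v u) with hO
  set R : Finset (Fin n) := W.filter (fun x => x ≠ v ∧ ¬ G v x ∧ ¬ G x v) with hR
  set t₀ : ℕ := I.card with ht₀
  have hqt : qmin ≤ t₀ := hdeg v hvW
  -- membership facts
  have hIW : I ⊆ W := Finset.filter_subset _ _
  have hOW : O ⊆ W := Finset.filter_subset _ _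
  have hvI : v ∉ I := by
    intro h; rw [hI, Finset.mem_filter] at h; exact hor.1 v h.2
  have hvO : v ∉ O := by
    intro h; rw [hO, Finset.mem_filter] at h; exact hor.1 v h.2
  have hIO : Disjoint I O := by
    rw [Finset.disjoint_left]
    intro x hx hx2
    rw [hI, Finset.mem_filter] at hx; rw [hO, Finset.mem_filter] at hx2
    exact hor.2 _ _ hx.2 hx2.2
  -- min degree sum
  have hmin : t₀ * t₀ ≤ ∑ u ∈ I, (W.filter fun w => G w u).card := by
    calc t₀ * t₀ = ∑ _u ∈ I, t₀ := by rw [Finset.sum_const, smul_eq_mul, mul_comm]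
    _ ≤ _ := Finset.sum_le_sum (fun u hu => hvmin u (hIW hu))
  have hswap : ∑ u ∈ I, (W.filter fun w => G w u).card
      = ∑ w ∈ W, (I.filter fun u => G w u).card := (double_count G W I).symm
  -- split W
  have hWsplit : W = (I ∪ O) ∪ ({v} ∪ R) := by
    ext x
    simp only [Finset.mem_union, hI, hO, hR, Finset.mem_filter, Finset.mem_singleton]
    constructor
    · intro hx
      by_cases h1 : G x v
      · exact Or.inl (Or.inl ⟨hx, h1⟩)
      by_cases h2 : G v x
      · exact Or.inl (Or.inr ⟨hx, h2⟩)
      by_cases h3 : x = v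
      · exact Or.inr (Or.inl h3)
      · exact Or.inr (Or.inr ⟨hx, h3, h2, h1⟩)
    · rintro ((⟨hx,_⟩|⟨hx,_⟩)|(rfl|⟨hx,_⟩)) <;> first | exact hx | exact hvW
  have hd1 : Disjoint (I ∪ O) ({v} ∪ R) := by
    rw [Finset.disjoint_left]
    intro x hx hx2
    simp only [Finset.mem_union, hI, hO, hR, Finset.mem_filter, Finset.mem_singleton] at hx hx2
    rcases hx2 with rfl | ⟨_, _, h2, h3⟩
    · rcases hx with h | h
      · exact hor.1 x h.2
      · exact hor.1 x h.2
    · rcases hx with h | h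
      · exact h3 h.2
      · exact h2 h.2
  have hd2 : Disjoint ({v} : Finset (Fin n)) R := by
    rw [Finset.disjoint_left]
    intro x hx hx2
    rw [Finset.mem_singleton] at hx
    rw [hR, Finset.mem_filter] at hx2
    exact hx2.2.1 (hx ▸ rfl)
  -- sum bounds
  have hsum : ∑ w ∈ W, (I.filter fun u => G w u).card
      = (∑ w ∈ I, (I.filter fun u => G w u).card)
      + (∑ w ∈ O, (I.filter fun u => G w u).card)
      + ((I.filter fun u => G v u).card
      + (∑ w ∈ R, (I.filter fun u => G w u).card)) := by
    rw [hWsplit, Finset.sum_union hd1, Finset.sum_union hIO, Finset.sum_union hd2,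
      Finset.sum_singleton]
  have hvzero : (I.filter fun u => G v u).card = 0 := by
    rw [Finset.card_eq_zero, Finset.filter_eq_empty_iff]
    intro u hu
    rw [hI, Finset.mem_filter] at hu
    exact fun h => hor.2 _ _ hu.2 h
  have hRbound : ∑ w ∈ R, (I.filter fun u => G w u).card ≤ p * t₀ := by
    calc ∑ w ∈ R, (I.filter fun u => G w u).card ≤ ∑ _w ∈ R, t₀ :=
        Finset.sum_le_sum (fun w _ => Finset.card_filter_le _ _)
    _ = R.card * t₀ := by rw [Finset.sum_const, smul_eq_mul]
    _ ≤ p * t₀ := Nat.mul_le_mul_right _ (hNA v W)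
  have hIbound : 2 * (∑ w ∈ I, (I.filter fun u => G w u).card) ≤ t₀ * t₀ - t₀ :=
    oriented_inner_bound hor I
  set eOI : ℕ := ∑ w ∈ O, (I.filter fun u => G w u).card with heOI
  have hQle : Q ≤ eOI := by
    have h1 := hmin
    rw [hswap, hsum, hvzero] at h1
    have h3 := hq t₀ hqt
    omega
  -- triangles through v
  set P : Finset (Fin n × Fin n) := (O ×ˢ I).filter (fun q => G q.1 q.2) with hP
  have hPcard : P.card = eOI := card_filter_prod O I (fun a b => G a b)
  set Tri : Finset (Finset (Fin n)) := P.image (fun q => ({v, q.1, q.2} : Finset (Fin n))) with hTri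
  have hmemP : ∀ q ∈ P, q.1 ∈ O ∧ q.2 ∈ I ∧ G q.1 q.2 := by
    intro q hq'
    rw [hP, Finset.mem_filter, Finset.mem_product] at hq'
    exact ⟨hq'.1.1, hq'.1.2, hq'.2⟩
  have hdistinct : ∀ q ∈ P, v ≠ q.1 ∧ v ≠ q.2 ∧ q.1 ≠ q.2 := by
    intro q hq'
    obtain ⟨h1, h2, h3⟩ := hmemP q hq'
    rw [hO, Finset.mem_filter] at h1
    rw [hI, Finset.mem_filter] at h2
    refine ⟨?_, ?_, ?_⟩
    · rintro rfl; exact hor.1 _ h1.2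
    · rintro rfl; exact hor.1 _ h2.2
    · rintro h; rw [h] at h1; exact hor.2 _ _ h2.2 h1.2
  have hTriCard : Tri.card = eOI := by
    rw [hTri, ← hPcard]
    apply Finset.card_image_of_injOn
    intro q hq' r hr' heq
    rw [Finset.mem_coe] at hq' hr'
    obtain ⟨hq1, hq2, _⟩ := hmemP q hq'
    obtain ⟨hr1, hr2, _⟩ := hmemP r hr'
    obtain ⟨hd1', hd2', hd3'⟩ := hdistinct q hq'
    obtain ⟨he1, he2, he3⟩ := hdistinct r hr'
    rw [hO, Finset.mem_filter] at hq1 hr1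
    rw [hI, Finset.mem_filter] at hq2 hr2
    have heq' : ({v, q.1, q.2} : Finset (Fin n)) = ({v, r.1, r.2} : Finset (Fin n)) := heq
    have hq1m : r.1 ∈ ({v, q.1, q.2} : Finset (Fin n)) := by
      rw [heq']; simp
    have hq2m : r.2 ∈ ({v, q.1, q.2} : Finset (Fin n)) := by
      rw [heq']; simp
    simp only [Finset.mem_insert, Finset.mem_singleton] at hq1m hq2m
    have e1 : r.1 = q.1 := by
      rcases hq1m with h | h | h
      · exact absurd h.symm he1
      · exact h
      · exfalso; rw [h] at hr1; exact hor.2 _ _ hq2.2 hr1.2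
    have e2 : r.2 = q.2 := by
      rcases hq2m with h | h | h
      · exact absurd h.symm he2
      · exfalso; rw [h] at hr2; exact hor.2 _ _ hr2.2 hq1.2
      · exact h
    exact Prod.ext e1.symm e2.symm
  -- Tri is inside the cyc filter of W, and disjoint from that of W.erase v
  have hTriSub : Tri ⊆ (W.powersetCard 3).filter (fun s => IsCycTri G s) := by
    intro s hs
    rw [hTri, Finset.mem_image] at hs
    obtain ⟨q, hq', rfl⟩ := hs
    obtain ⟨h1, h2, h3⟩ := hmemP q hq'
    obtain ⟨hd1', hd2', hd3'⟩ := hdistinct q hq'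
    rw [Finset.mem_filter, Finset.mem_powersetCard]
    refine ⟨⟨?_, ?_⟩, ?_⟩
    · intro x hx
      simp only [Finset.mem_insert, Finset.mem_singleton] at hx
      rcases hx with rfl | rfl | rfl
      · exact hvW
      · exact hOW h1
      · exact hIW h2
    · rw [Finset.card_insert_of_notMem, Finset.card_insert_of_notMem, Finset.card_singleton]
      · simp [hd3']
      · simp only [Finset.mem_insert, Finset.mem_singleton]
        push_neg
        exact ⟨hd1', hd2'⟩
    · refine ⟨v, q.1, q.2, ?_, h3, ?_, rfl⟩
      · rw [hO, Finset.mem_filter] at h1; exact h1.2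
      · rw [hI, Finset.mem_filter] at h2; exact h2.2
  have hfinal : Q + cycIn G (W.erase v) ≤ cycIn G W := by
    have hsub2 : ((W.erase v).powersetCard 3).filter (fun s => IsCycTri G s)
        ⊆ (W.powersetCard 3).filter (fun s => IsCycTri G s) :=
      Finset.filter_subset_filter _ (Finset.powersetCard_mono (Finset.erase_subset _ _))
    have hdisjT : Disjoint Tri (((W.erase v).powersetCard 3).filter (fun s => IsCycTri G s)) := by
      rw [Finset.disjoint_left]
      intro s hs hs2
      rw [hTri, Finset.mem_image] at hs
      obtain ⟨q, hq', rfl⟩ := hs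
      rw [Finset.mem_filter, Finset.mem_powersetCard] at hs2
      have : v ∈ W.erase v := hs2.1.1 (by simp)
      exact (Finset.notMem_erase v W) this
    have hun : Tri ∪ ((W.erase v).powersetCard 3).filter (fun s => IsCycTri G s)
        ⊆ (W.powersetCard 3).filter (fun s => IsCycTri G s) :=
      Finset.union_subset hTriSub hsub2
    have := Finset.card_le_card hun
    rw [Finset.card_union_of_disjoint hdisjT, hTriCard] at this
    unfold cycIn
    omega
  exact hfinal

lemma lemM (hor : IsOriented G) (p Q qmin : ℕ)
    (hNA : ∀ v : Fin n, ∀ F : Finset (Fin n),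
      (F.filter fun x => x ≠ v ∧ ¬ G v x ∧ ¬ G x v).card ≤ p)
    (hq : ∀ t : ℕ, qmin ≤ t → 2*Q + (t*t - t) + 2*(p*t) ≤ 2*(t*t))
    (hq1 : 1 ≤ qmin) :
    ∀ (m : ℕ) (W : Finset (Fin n)), W.Nonempty →
      (∀ v ∈ W, qmin + m ≤ (W.filter fun u => G u v).card) →
      m * Q ≤ cycIn G W := by
  intro m
  induction m with
  | zero => intro W _ _; simp
  | succ m ih =>
    intro W hne hdeg
    obtain ⟨v, hvW, hstep⟩ := core_step hor p Q qmin hNA hq W hne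
      (fun v hv => le_trans (by omega) (hdeg v hv))
    have hIsub : W.filter (fun u => G u v) ⊆ W.erase v := by
      intro u hu
      rw [Finset.mem_filter] at hu
      rw [Finset.mem_erase]
      exact ⟨fun h => hor.1 v (h ▸ hu.2), hu.1⟩
    have hne' : (W.erase v).Nonempty := by
      have h1 := hdeg v hvW
      have h2 : 1 ≤ (W.filter fun u => G u v).card := by omega
      obtain ⟨u, hu⟩ := Finset.card_pos.mp h2
      exact ⟨u, hIsub hu⟩
    have hdeg' : ∀ u ∈ W.erase v, qmin + m ≤ ((W.erase v).filter fun w => G w u).card := by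
      intro u hu
      have huW : u ∈ W := Finset.mem_of_mem_erase hu
      have hsub : W.filter (fun w => G w u) ⊆ insert v ((W.erase v).filter fun w => G w u) := by
        intro w hw
        rw [Finset.mem_filter] at hw
        rw [Finset.mem_insert]
        by_cases hwv : w = v
        · exact Or.inl hwv
        · exact Or.inr (by rw [Finset.mem_filter, Finset.mem_erase]; exact ⟨⟨hwv, hw.1⟩, hw.2⟩)
      have := (hdeg u huW).trans (Finset.card_le_card hsub)
      have := Finset.card_insert_le v ((W.erase v).filter fun w => G w u)
      omega
    have := ih (W.erase v) hne' hdeg'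
    calc (m + 1) * Q = Q + m * Q := by ring
    _ ≤ Q + cycIn G (W.erase v) := by omega
    _ ≤ cycIn G W := hstep

lemma stepA {n : ℕ} {G : Fin n → Fin n → Prop} (hor : IsOriented G) (ξ α : ℝ)
    (hξ : 0 < ξ) (hξ1 : ξ ≤ 1)
    (A : Finset (Fin n)) (p : ℕ)
    (hNA : ∀ v : Fin n, ∀ F : Finset (Fin n),
      (F.filter fun x => x ≠ v ∧ ¬ G v x ∧ ¬ G x v).card ≤ p)
    (hp : (p:ℝ) ≤ ξ * n / 512)
    (hbig : (2^20 : ℝ) ≤ ξ * n)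
    (hA : ξ * n ≤ (A.card:ℝ))
    (hcyc : (cycIn G A : ℝ) ≤ α * n^3)
    (hα : α ≤ ξ^4/2^30) :
    ξ * n / 16 ≤ ((A.filter fun a => (inDegOn G a A : ℝ) ≤ ξ*n/8).card : ℝ) := by
  classical
  by_contra hS
  push_neg at hS
  set X : ℝ := ξ * n with hX
  set S : Finset (Fin n) := A.filter (fun a => (inDegOn G a A : ℝ) ≤ ξ*n/8) with hSdef
  set W : Finset (Fin n) := A \ S with hWdef
  have hn0 : (0:ℝ) < n := by nlinarith
  have hX0 : (0:ℝ) < X := by positivity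
  have hSA : S ⊆ A := Finset.filter_subset _ _
  have hWA : W ⊆ A := Finset.sdiff_subset
  -- numeric setup
  set R₀ : ℕ := ⌊X / 16⌋₊ + 1 with hR₀
  have hR₀lb : X / 16 < (R₀ : ℝ) := by
    rw [hR₀]; push_cast; exact Nat.lt_floor_add_one _
  have hR₀ub : (R₀ : ℝ) ≤ X / 16 + 1 := by
    rw [hR₀]; push_cast
    have := Nat.floor_le (by positivity : (0:ℝ) ≤ X / 16)
    linarith
  set m : ℕ := R₀ / 2 with hm
  set qmin : ℕ := R₀ - R₀ / 2 with hqmin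
  have hsum : qmin + m = R₀ := by omega
  have h2q : R₀ ≤ 2 * qmin := by omega
  have h2m : R₀ ≤ 2 * m + 1 := by omega
  have hqminR : X / 32 ≤ (qmin : ℝ) := by
    have : (R₀:ℝ) ≤ 2 * qmin := by exact_mod_cast h2q
    linarith
  have hmR : X / 64 ≤ (m : ℝ) := by
    have : (R₀:ℝ) ≤ 2 * m + 1 := by exact_mod_cast h2m
    have h1 : (1:ℝ) ≤ X / 32 := by linarith
    linarith
  have hp4 : 4 * p + 4 ≤ qmin := by
    have : ((4 * p + 4 : ℕ) : ℝ) ≤ (qmin : ℝ) := by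
      push_cast
      have h4 : (4:ℝ) ≤ X / 128 := by linarith
      linarith
    exact_mod_cast this
  set Q : ℕ := qmin * qmin / 4 with hQ
  have hq : ∀ t : ℕ, qmin ≤ t → 2*Q + (t*t - t) + 2*(p*t) ≤ 2*(t*t) := by
    intro t ht
    have h1 : qmin * qmin ≤ t * t := Nat.mul_le_mul ht ht
    have h3 : 4 * (p * t) ≤ t * t - 4 * t := by
      have h2 : 4 * p ≤ t - 4 := by omega
      calc 4 * (p*t) = (4*p)*t := by ring
      _ ≤ (t-4)*t := Nat.mul_le_mul_right t h2
      _ = t*t - 4*t := by rw [Nat.sub_mul]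
    have h5 : 4 * t ≤ t * t := Nat.mul_le_mul_right t (by omega)
    rw [hQ]
    revert h1 h3 h5
    generalize t * t = T2
    generalize p * t = P1
    generalize qmin * qmin = QQ
    intro h1 h3 h5
    omega
  have hq1 : 1 ≤ qmin := by omega
  -- W is nonempty
  have hWcard : S.card + W.card = A.card := by
    rw [hWdef, Finset.card_sdiff_of_subset hSA]
    have := Finset.card_le_card hSA
    omega
  have hWr : (S.card:ℝ) + (W.card:ℝ) = (A.card:ℝ) := by exact_mod_cast hWcard
  have hWne : W.Nonempty := by
    rw [← Finset.card_pos]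
    have : (0:ℝ) < (W.card:ℝ) := by
      have : X / 16 ≤ X := by linarith
      linarith
    exact_mod_cast this
  -- min in-degree within W
  have hdeg : ∀ v ∈ W, qmin + m ≤ (W.filter fun u => G u v).card := by
    intro v hv
    rw [hsum]
    have hvA : v ∈ A := hWA hv
    have hvnS : v ∉ S := (Finset.mem_sdiff.mp hv).2
    have hlarge : ξ * n / 8 < (inDegOn G v A : ℝ) := by
      by_contra hc
      push_neg at hc
      exact hvnS (Finset.mem_filter.mpr ⟨hvA, hc⟩)
    have hsub : (A.filter fun u => G u v) \ S ⊆ W.filter fun u => G u v := by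
      intro x hx
      rw [Finset.mem_sdiff, Finset.mem_filter] at hx
      rw [Finset.mem_filter, hWdef, Finset.mem_sdiff]
      exact ⟨⟨hx.1.1, hx.2⟩, hx.1.2⟩
    have hle : (A.filter fun u => G u v).card ≤ (W.filter fun u => G u v).card + S.card := by
      have hcard1 : (A.filter fun u => G u v).card - S.card ≤ ((A.filter fun u => G u v) \ S).card :=
        Finset.le_card_sdiff _ _
      have := Finset.card_le_card hsub
      omega
    have hreal : X / 16 < ((W.filter fun u => G u v).card : ℝ) := by
      have h1 : ((A.filter fun u => G u v).card : ℝ) > X / 8 := hlarge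
      have h2 : ((A.filter fun u => G u v).card : ℝ)
          ≤ ((W.filter fun u => G u v).card : ℝ) + (S.card:ℝ) := by exact_mod_cast hle
      linarith
    have hfloor : ⌊X / 16⌋₊ < (W.filter fun u => G u v).card := by
      rw [Nat.floor_lt (by positivity : (0:ℝ) ≤ X/16)]
      exact hreal
    omega
  have hmain := lemM hor p Q qmin hNA hq hq1 m W hWne hdeg
  have hmono : cycIn G W ≤ cycIn G A := by
    unfold cycIn
    exact Finset.card_le_card
      (Finset.filter_subset_filter _ (Finset.powersetCard_mono hWA))
  -- final contradiction
  have hQ3 : (qmin:ℝ) * qmin ≤ 4*(Q:ℝ) + 3 := by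
    have : qmin*qmin ≤ 4*Q+3 := by rw [hQ]; omega
    exact_mod_cast this
  have hsq1 : (X/32)*(X/32) ≤ (qmin:ℝ)*qmin :=
    mul_le_mul hqminR hqminR (by positivity) (Nat.cast_nonneg _)
  have hsq1' : (X/32)*(X/32) = X*X/1024 := by ring
  have hsq2 : (2^20:ℝ)*(2^20:ℝ) ≤ X*X := mul_le_mul hbig hbig (by norm_num) (by linarith)
  have hQr : X*X/8192 ≤ (Q:ℝ) := by
    rw [hsq1'] at hsq1
    norm_num at hsq2
    linarith
  have hmq : X*X*X/(64*8192) ≤ (m:ℝ)*(Q:ℝ) := by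
    have h := mul_le_mul hmR hQr (by positivity) (le_trans (by positivity) hmR)
    calc X*X*X/(64*8192) = (X/64) * (X*X/8192) := by ring
    _ ≤ (m:ℝ)*(Q:ℝ) := h
  have hξ43 : ξ^4 ≤ ξ^3 := pow_le_pow_of_le_one (le_of_lt hξ) hξ1 (by norm_num)
  have hXcube : X*X*X = ξ^3 * n^3 := by rw [hX]; ring
  have hstrict : α * n^3 < X*X*X/(64*8192) := by
    rw [hXcube]
    have hn3 : (0:ℝ) < n^3 := by positivity
    have h1 : α * n^3 ≤ (ξ^4/2^30) * n^3 := mul_le_mul_of_nonneg_right hα (le_of_lt hn3)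
    have h2 : (ξ^4/2^30) * n^3 ≤ (ξ^3/2^30) * n^3 :=
      mul_le_mul_of_nonneg_right (by linarith) (le_of_lt hn3)
    have h3 : (0:ℝ) < ξ^3 * n^3 := by positivity
    have h4 : (ξ^3/2^30) * n^3 < ξ^3 * n^3 / (64*8192) := by
      have e1 : (ξ^3/2^30) * n^3 = ξ^3*n^3/1073741824 := by norm_num; ring
      have e2 : ξ^3 * n^3 / (64*8192) = ξ^3*n^3/524288 := by norm_num
      rw [e1, e2]
      linarith
    linarith
  have hfin : ((m * Q : ℕ) : ℝ) ≤ (cycIn G A : ℝ) := by exact_mod_cast le_trans hmain hmono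
  push_cast at hfin
  linarith

section Flip

variable {n : ℕ} (G : Fin n → Fin n → Prop)

lemma isOriented_flip (hor : IsOriented G) : IsOriented (fun a b => G b a) :=
  ⟨fun v h => hor.1 v h, fun u v h h' => hor.2 v u h h'⟩

lemma outDeg_flip (v : Fin n) : outDeg (fun a b => G b a) v = inDeg G v := rfl

lemma inDeg_flip (v : Fin n) : inDeg (fun a b => G b a) v = outDeg G v := rfl

lemma inDegOn_flip (v : Fin n) (A : Finset (Fin n)) :
    inDegOn (fun a b => G b a) v A = outDegOn G v A := rfl

lemma tripleton_comm (a b c : Fin n) : ({a, b, c} : Finset (Fin n)) = {a, c, b} := by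
  ext x; simp only [Finset.mem_insert, Finset.mem_singleton]; tauto

lemma isCycTri_flip (s : Finset (Fin n)) :
    IsCycTri (fun a b => G b a) s ↔ IsCycTri G s := by
  constructor
  · rintro ⟨a, b, c, h1, h2, h3, rfl⟩
    exact ⟨a, c, b, h3, h2, h1, tripleton_comm a b c⟩
  · rintro ⟨a, b, c, h1, h2, h3, rfl⟩
    exact ⟨a, c, b, h3, h2, h1, tripleton_comm a b c⟩

lemma cycIn_flip (A : Finset (Fin n)) : cycIn (fun a b => G b a) A = cycIn G A := by
  unfold cycIn
  congr 1
  apply Finset.filter_congr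
  intro s _
  simp only [isCycTri_flip]

lemma cyc3_flip (A B C : Finset (Fin n)) :
    cyc3 (fun a b => G b a) A B C = cyc3 G A B C := by
  unfold cyc3
  congr 1
  apply Finset.filter_congr
  intro s _
  simp only [isCycTri_flip]

end Flip

section TriBound

variable {n : ℕ} {G : Fin n → Fin n → Prop}

lemma triangle_bound (hor : IsOriented G) (A C : Finset (Fin n)) (hAC : Disjoint A C)
    (Sset Xset : Finset (Fin n)) (hS : Sset ⊆ A) (hX : Xset ⊆ C) (κ : ℝ)
    (hK : ∀ z ∈ Xset, κ ≤ ((((Sset.filter fun a => G z a) ×ˢ (A.filter fun a' => G a' z)).filter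
        (fun q => G q.1 q.2)).card : ℝ)) :
    (Xset.card : ℝ) * κ ≤ (cyc3 G A A C : ℝ) := by
  classical
  set P : Fin n → Finset (Fin n × Fin n) := fun z =>
    ((Sset.filter fun a => G z a) ×ˢ (A.filter fun a' => G a' z)).filter (fun q => G q.1 q.2)
    with hP
  set Tri : Fin n → Finset (Finset (Fin n)) := fun z =>
    (P z).image (fun q => ({z, q.1, q.2} : Finset (Fin n))) with hTri
  have hmemP : ∀ z, ∀ q ∈ P z, q.1 ∈ A ∧ G z q.1 ∧ q.2 ∈ A ∧ G q.2 z ∧ G q.1 q.2 := by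
    intro z q hq
    rw [hP, Finset.mem_filter, Finset.mem_product, Finset.mem_filter, Finset.mem_filter] at hq
    exact ⟨hS hq.1.1.1, hq.1.1.2, hq.1.2.1, hq.1.2.2, hq.2⟩
  have hdist : ∀ z ∈ Xset, ∀ q ∈ P z, z ≠ q.1 ∧ z ≠ q.2 ∧ q.1 ≠ q.2 := by
    intro z hz q hq
    obtain ⟨h1, h2, h3, h4, h5⟩ := hmemP z q hq
    have hzC : z ∈ C := hX hz
    refine ⟨?_, ?_, ?_⟩
    · rintro rfl; exact Finset.disjoint_left.mp hAC h1 hzC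
    · rintro rfl; exact Finset.disjoint_left.mp hAC h3 hzC
    · rintro h; exact hor.1 q.2 (h ▸ h5)
  -- image cardinality
  have hinj : ∀ z ∈ Xset, (Tri z).card = (P z).card := by
    intro z hz
    rw [hTri]
    apply Finset.card_image_of_injOn
    intro q hq r hr heq
    rw [Finset.mem_coe] at hq hr
    obtain ⟨hq1, hq2, hq3, hq4, hq5⟩ := hmemP z q hq
    obtain ⟨hr1, hr2, hr3, hr4, hr5⟩ := hmemP z r hr
    obtain ⟨hd1, hd2, hd3⟩ := hdist z hz q hq
    obtain ⟨he1, he2, he3⟩ := hdist z hz r hr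
    have heq' : ({z, q.1, q.2} : Finset (Fin n)) = ({z, r.1, r.2} : Finset (Fin n)) := heq
    have hm1 : r.1 ∈ ({z, q.1, q.2} : Finset (Fin n)) := by rw [heq']; simp
    have hm2 : r.2 ∈ ({z, q.1, q.2} : Finset (Fin n)) := by rw [heq']; simp
    simp only [Finset.mem_insert, Finset.mem_singleton] at hm1 hm2
    have e1 : r.1 = q.1 := by
      rcases hm1 with h | h | h
      · exact absurd h.symm he1
      · exact h
      · exfalso; rw [h] at hr2; exact hor.2 _ _ hq4 hr2
    have e2 : r.2 = q.2 := by
      rcases hm2 with h | h | h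
      · exact absurd h.symm he2
      · exfalso; rw [h] at hr4; exact hor.2 _ _ hq2 hr4
      · exact h
    exact Prod.ext e1.symm e2.symm
  -- triangles are counted by cyc3
  have hsub : ∀ z ∈ Xset, Tri z ⊆ (((univ : Finset (Fin n)).powersetCard 3).filter fun s =>
      IsCycTri G s ∧ ∃ x ∈ A, ∃ y ∈ A, ∃ w ∈ C, s = ({x, y, w} : Finset (Fin n))) := by
    intro z hz s hs
    rw [hTri, Finset.mem_image] at hs
    obtain ⟨q, hq, rfl⟩ := hs
    obtain ⟨hq1, hq2, hq3, hq4, hq5⟩ := hmemP z q hq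
    obtain ⟨hd1, hd2, hd3⟩ := hdist z hz q hq
    rw [Finset.mem_filter, Finset.mem_powersetCard]
    refine ⟨⟨Finset.subset_univ _, ?_⟩, ⟨z, q.1, q.2, hq2, hq5, hq4, rfl⟩, ?_⟩
    · rw [Finset.card_insert_of_notMem, Finset.card_insert_of_notMem, Finset.card_singleton]
      · simp [hd3]
      · simp only [Finset.mem_insert, Finset.mem_singleton]; push_neg; exact ⟨hd1, hd2⟩
    · refine ⟨q.1, hq1, q.2, hq3, z, hX hz, ?_⟩
      ext x
      simp only [Finset.mem_insert, Finset.mem_singleton]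
      tauto
  -- disjointness
  have hdisj : ∀ z ∈ Xset, ∀ w ∈ Xset, z ≠ w → Disjoint (Tri z) (Tri w) := by
    intro z hz w hw hzw
    rw [Finset.disjoint_left]
    intro s hsz hsw
    rw [hTri, Finset.mem_image] at hsz hsw
    obtain ⟨q, hq, rfl⟩ := hsz
    obtain ⟨r, hr, heq⟩ := hsw
    obtain ⟨hq1, _, hq3, _, _⟩ := hmemP z q hq
    obtain ⟨hr1, _, hr3, _, _⟩ := hmemP w r hr
    have hzmem : z ∈ ({w, r.1, r.2} : Finset (Fin n)) := by
      have heq' : ({w, r.1, r.2} : Finset (Fin n)) = ({z, q.1, q.2} : Finset (Fin n)) := heq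
      rw [heq']; simp
    simp only [Finset.mem_insert, Finset.mem_singleton] at hzmem
    have hzC : z ∈ C := hX hz
    rcases hzmem with h | h | h
    · exact hzw h
    · exact Finset.disjoint_left.mp hAC (h ▸ hr1) hzC
    · exact Finset.disjoint_left.mp hAC (h ▸ hr3) hzC
  -- put it together
  have hbi : (Xset.biUnion Tri).card = ∑ z ∈ Xset, (Tri z).card :=
    Finset.card_biUnion hdisj
  have hbisub : Xset.biUnion Tri ⊆ (((univ : Finset (Fin n)).powersetCard 3).filter fun s =>
      IsCycTri G s ∧ ∃ x ∈ A, ∃ y ∈ A, ∃ w ∈ C, s = ({x, y, w} : Finset (Fin n))) := by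
    intro s hs
    rw [Finset.mem_biUnion] at hs
    obtain ⟨z, hz, hsz⟩ := hs
    exact hsub z hz hsz
  have hcard : ∑ z ∈ Xset, (Tri z).card ≤ cyc3 G A A C := by
    rw [← hbi]
    exact Finset.card_le_card hbisub
  have hsum : (Xset.card : ℝ) * κ ≤ ((∑ z ∈ Xset, (Tri z).card : ℕ) : ℝ) := by
    push_cast
    calc (Xset.card : ℝ) * κ = ∑ _z ∈ Xset, κ := by rw [Finset.sum_const, nsmul_eq_mul]
    _ ≤ ∑ z ∈ Xset, ((Tri z).card : ℝ) := by
        apply Finset.sum_le_sum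
        intro z hz
        calc κ ≤ ((P z).card : ℝ) := hK z hz
        _ = ((Tri z).card : ℝ) := by rw [hinj z hz]
  calc (Xset.card : ℝ) * κ ≤ ((∑ z ∈ Xset, (Tri z).card : ℕ) : ℝ) := hsum
  _ ≤ (cyc3 G A A C : ℝ) := by exact_mod_cast hcard

end TriBound

section SizeLemma

variable {n : ℕ} {G : Fin n → Fin n → Prop}

lemma nonadj_bound {n : ℕ} {G : Fin n → Fin n → Prop} (hor : IsOriented G) (c : ℝ)
    (hsd : MinSemidegreeGE G ((1/2 - c) * n)) :
    ∀ v : Fin n, ∀ F : Finset (Fin n),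
      ((F.filter fun x => x ≠ v ∧ ¬ G v x ∧ ¬ G x v).card : ℝ) ≤ 2*c*n := by
  intro v F
  set O : Finset (Fin n) := univ.filter (fun u => G v u) with hO
  set I : Finset (Fin n) := univ.filter (fun u => G u v) with hI
  set Rv : Finset (Fin n) := univ.filter (fun x => x ≠ v ∧ ¬ G v x ∧ ¬ G x v) with hRv
  have hsub : F.filter (fun x => x ≠ v ∧ ¬ G v x ∧ ¬ G x v) ⊆ Rv := by
    intro x hx
    rw [Finset.mem_filter] at hx
    rw [hRv, Finset.mem_filter]
    exact ⟨Finset.mem_univ x, hx.2⟩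
  have hcardle : (F.filter (fun x => x ≠ v ∧ ¬ G v x ∧ ¬ G x v)).card ≤ Rv.card :=
    Finset.card_le_card hsub
  have hdOI : Disjoint O I := by
    rw [Finset.disjoint_left]; intro x hx hx2
    rw [hO, Finset.mem_filter] at hx; rw [hI, Finset.mem_filter] at hx2
    exact hor.2 _ _ hx.2 hx2.2
  have hdOR : Disjoint O Rv := by
    rw [Finset.disjoint_left]; intro x hx hx2
    rw [hO, Finset.mem_filter] at hx; rw [hRv, Finset.mem_filter] at hx2
    exact hx2.2.2.1 hx.2
  have hdIR : Disjoint I Rv := by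
    rw [Finset.disjoint_left]; intro x hx hx2
    rw [hI, Finset.mem_filter] at hx; rw [hRv, Finset.mem_filter] at hx2
    exact hx2.2.2.2 hx.2
  have hvO : v ∉ O := by
    intro h; rw [hO, Finset.mem_filter] at h; exact hor.1 v h.2
  have hvI : v ∉ I := by
    intro h; rw [hI, Finset.mem_filter] at h; exact hor.1 v h.2
  have hvR : v ∉ Rv := by
    intro h; rw [hRv, Finset.mem_filter] at h; exact h.2.1 rfl
  have hcup : (insert v (O ∪ I ∪ Rv)).card = 1 + (O.card + I.card + Rv.card) := by
    rw [Finset.card_insert_of_notMem (by simp [hvO, hvI, hvR]),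
      Finset.card_union_of_disjoint (Finset.disjoint_union_left.mpr ⟨hdOR, hdIR⟩),
      Finset.card_union_of_disjoint hdOI]
    omega
  have hle : (insert v (O ∪ I ∪ Rv)).card ≤ n := by
    calc (insert v (O ∪ I ∪ Rv)).card ≤ (univ : Finset (Fin n)).card := Finset.card_le_univ _
    _ = n := by rw [Finset.card_univ, Fintype.card_fin]
  have hOc : (1/2 - c)*n ≤ (O.card:ℝ) := (hsd v).1
  have hIc : (1/2 - c)*n ≤ (I.card:ℝ) := (hsd v).2
  have hRc : 1 + (O.card:ℝ) + I.card + Rv.card ≤ n := by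
    have : ((1 + (O.card + I.card + Rv.card) : ℕ) : ℝ) ≤ (n:ℝ) := by
      rw [← hcup]; exact_mod_cast hle
    push_cast at this
    linarith
  have : (Rv.card : ℝ) ≤ 2*c*n := by linarith
  calc ((F.filter (fun x => x ≠ v ∧ ¬ G v x ∧ ¬ G x v)).card : ℝ) ≤ (Rv.card : ℝ) := by
        exact_mod_cast hcardle
  _ ≤ 2*c*n := this

set_option maxHeartbeats 1000000 in
lemma sizeLemma (hor : IsOriented G)
    (η ξ α c : ℝ)
    (hη : 0 < η) (hη1 : η < 1)
    (hξ : 0 < ξ) (hξη : ξ ≤ η/100)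
    (hc : 0 < c) (hcε : c ≤ ξ^4/2^30)
    (hα : α ≤ ξ^4/2^30)
    (hbig : (2^20:ℝ) ≤ ξ * n)
    (hsd : MinSemidegreeGE G ((1/2 - c) * n))
    (A B C : Finset (Fin n))
    (hAB : Disjoint A B) (hAC : Disjoint A C) (hBC : Disjoint B C)
    (hunion : A ∪ B ∪ C = univ)
    (hAcard : η * n ≤ (A.card : ℝ))
    (hcycA : (cycIn G A : ℝ) ≤ α * n^3)
    (hcyc3 : (cyc3 G A A C : ℝ) ≤ α * n^3) :
    (n:ℝ)/2 - (B.card:ℝ) - ξ * n ≤ ((C.filter fun z => (inDegOn G z A : ℝ) ≤ ξ*n/2).card : ℝ) := by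
  classical
  have hXn0 : (0:ℝ) < ξ * n := lt_of_lt_of_le (by norm_num) hbig
  have hn0 : (0:ℝ) < n := by nlinarith
  have hξ1 : ξ ≤ 1 := by linarith
  have hξ4 : ξ^4 ≤ ξ := by nlinarith [pow_le_one₀ (le_of_lt hξ) hξ1 (n := 3), sq_nonneg ξ]
  have hNAr : ∀ v : Fin n, ∀ F : Finset (Fin n),
      ((F.filter fun x => x ≠ v ∧ ¬ G v x ∧ ¬ G x v).card : ℝ) ≤ 2*c*n :=
    nonadj_bound hor c hsd
  set p : ℕ := ⌊2*c*n⌋₊ with hp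
  have hNA : ∀ v : Fin n, ∀ F : Finset (Fin n),
      (F.filter fun x => x ≠ v ∧ ¬ G v x ∧ ¬ G x v).card ≤ p :=
    fun v F => Nat.le_floor (hNAr v F)
  have hpr : (p:ℝ) ≤ 2*c*n := Nat.floor_le (by positivity)
  have hcnsmall : 2*c*n ≤ ξ*n/2^25 := by nlinarith
  have hp512 : (p:ℝ) ≤ ξ*n/512 := by
    have : ξ*n/2^25 ≤ ξ*n/512 := by norm_num; linarith
    linarith
  -- step A
  have hAge : ξ * n ≤ (A.card:ℝ) := by nlinarith
  have hSlb := stepA hor ξ α hξ hξ1 A p hNA hp512 hbig hAge hcycA hα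
  set Sset : Finset (Fin n) := A.filter (fun a => (inDegOn G a A : ℝ) ≤ ξ*n/8) with hSset
  have hSsub : Sset ⊆ A := Finset.filter_subset _ _
  set Cm : Finset (Fin n) := C.filter (fun z => (inDegOn G z A : ℝ) ≤ ξ*n/2) with hCm
  set Xset : Finset (Fin n) := C.filter (fun z =>
    (ξ/4) * Sset.card < ((Sset.filter fun a => G z a).card : ℝ)
    ∧ ξ*n/2 < (inDegOn G z A : ℝ)) with hXset
  have hXsub : Xset ⊆ C := Finset.filter_subset _ _
  -- per z triangle count
  have hK : ∀ z ∈ Xset, ξ^3*n^2/256 ≤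
      ((((Sset.filter fun a => G z a) ×ˢ (A.filter fun a' => G a' z)).filter
        (fun q => G q.1 q.2)).card : ℝ) := by
    intro z hz
    rw [hXset, Finset.mem_filter] at hz
    obtain ⟨hzC, hSz, hIz⟩ := hz
    set Sz : Finset (Fin n) := Sset.filter (fun a => G z a) with hSzd
    set Iz : Finset (Fin n) := A.filter (fun a' => G a' z) with hIzd
    have hIzcard : (Iz.card : ℝ) = (inDegOn G z A : ℝ) := rfl
    have hinner : ∀ a ∈ Sz, ξ*n/4 ≤ ((Iz.filter fun y => G a y).card : ℝ) := by
      intro a ha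
      rw [hSzd, Finset.mem_filter] at ha
      obtain ⟨haS, hzGa⟩ := ha
      have haA : a ∈ A := hSsub haS
      have haindeg : (inDegOn G a A : ℝ) ≤ ξ*n/8 := by
        rw [hSset, Finset.mem_filter] at haS; exact haS.2
      have hsplit : (Iz.filter fun y => G a y).card + (Iz.filter fun y => ¬ G a y).card
          = Iz.card := Finset.card_filter_add_card_filter_not _
      have hbadsub : Iz.filter (fun y => ¬ G a y) ⊆
          (A.filter fun a' => G a' a) ∪ ((A.filter fun x => x ≠ a ∧ ¬ G a x ∧ ¬ G x a) ∪ {a}) := by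
        intro x hx
        rw [Finset.mem_filter, hIzd, Finset.mem_filter] at hx
        obtain ⟨⟨hxA, _⟩, hnGax⟩ := hx
        rw [Finset.mem_union, Finset.mem_union, Finset.mem_singleton]
        by_cases hxa : x = a
        · exact Or.inr (Or.inr hxa)
        by_cases hGxa : G x a
        · exact Or.inl (Finset.mem_filter.mpr ⟨hxA, hGxa⟩)
        · exact Or.inr (Or.inl (Finset.mem_filter.mpr ⟨hxA, hxa, hnGax, hGxa⟩))
      have hbad : ((Iz.filter fun y => ¬ G a y).card : ℝ) ≤ ξ*n/8 + (2*c*n + 1) := by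
        have h1 : (Iz.filter fun y => ¬ G a y).card ≤
            (A.filter fun a' => G a' a).card
            + ((A.filter fun x => x ≠ a ∧ ¬ G a x ∧ ¬ G x a).card + 1) := by
          calc (Iz.filter fun y => ¬ G a y).card
              ≤ ((A.filter fun a' => G a' a) ∪ ((A.filter fun x => x ≠ a ∧ ¬ G a x ∧ ¬ G x a) ∪ {a})).card :=
              Finset.card_le_card hbadsub
          _ ≤ (A.filter fun a' => G a' a).card + ((A.filter fun x => x ≠ a ∧ ¬ G a x ∧ ¬ G x a) ∪ {a}).card :=
              Finset.card_union_le _ _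
          _ ≤ (A.filter fun a' => G a' a).card + ((A.filter fun x => x ≠ a ∧ ¬ G a x ∧ ¬ G x a).card + 1) := by
              have h0 := Finset.card_union_le (A.filter fun x => x ≠ a ∧ ¬ G a x ∧ ¬ G x a) ({a} : Finset (Fin n))
              rw [Finset.card_singleton] at h0
              omega
        have h2 : ((A.filter fun a' => G a' a).card : ℝ) ≤ ξ*n/8 := haindeg
        have h3 : ((A.filter fun x => x ≠ a ∧ ¬ G a x ∧ ¬ G x a).card : ℝ) ≤ 2*c*n := hNAr a A
        have h1' : ((Iz.filter fun y => ¬ G a y).card : ℝ) ≤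
            ((A.filter fun a' => G a' a).card : ℝ)
            + (((A.filter fun x => x ≠ a ∧ ¬ G a x ∧ ¬ G x a).card : ℝ) + 1) := by
          exact_mod_cast h1
        linarith
      have hone : (1:ℝ) ≤ ξ*n/2^20 := by
        rw [le_div_iff₀ (by norm_num : (0:ℝ) < 2^20)]
        linarith
      have hcn1 : 2*c*n + 1 ≤ ξ*n/16 := by linarith
      have hsplit' : ((Iz.filter fun y => G a y).card : ℝ)
          = (Iz.card : ℝ) - ((Iz.filter fun y => ¬ G a y).card : ℝ) := by
        have : (((Iz.filter fun y => G a y).card + (Iz.filter fun y => ¬ G a y).card : ℕ) : ℝ)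
            = (Iz.card : ℝ) := by exact_mod_cast hsplit
        push_cast at this
        linarith
      rw [hsplit', hIzcard]
      linarith
    -- sum over Sz
    have hPN : ((Sz ×ˢ Iz).filter (fun q => G q.1 q.2)).card
        = ∑ a ∈ Sz, (Iz.filter fun y => G a y).card := by
      rw [Finset.card_filter, Finset.sum_product]
      simp only [Finset.card_filter]
    have hPcard : (((Sz ×ˢ Iz).filter (fun q => G q.1 q.2)).card : ℝ)
        = ∑ a ∈ Sz, ((Iz.filter fun y => G a y).card : ℝ) := by
      rw [hPN]
      push_cast
      rfl
    have hSzlb : ξ^2*n/64 ≤ (Sz.card : ℝ) := by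
      have h1 : (ξ/4) * Sset.card < (Sz.card : ℝ) := hSz
      have h2 : (ξ/4) * (ξ*n/16) ≤ (ξ/4) * Sset.card := by
        apply mul_le_mul_of_nonneg_left hSlb (by positivity)
      have h3 : (ξ/4) * (ξ*n/16) = ξ^2*n/64 := by ring
      linarith
    have : (Sz.card : ℝ) * (ξ*n/4) ≤ ∑ a ∈ Sz, ((Iz.filter fun y => G a y).card : ℝ) := by
      calc (Sz.card : ℝ) * (ξ*n/4) = ∑ _a ∈ Sz, (ξ*n/4) := by
            rw [Finset.sum_const, nsmul_eq_mul]
      _ ≤ _ := Finset.sum_le_sum hinner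
    rw [hPcard]
    calc ξ^3*n^2/256 = (ξ^2*n/64) * (ξ*n/4) := by ring
    _ ≤ (Sz.card : ℝ) * (ξ*n/4) := by
        apply mul_le_mul_of_nonneg_right hSzlb (by positivity)
    _ ≤ _ := this
  have htri := triangle_bound hor A C hAC Sset Xset hSsub hXsub (ξ^3*n^2/256) hK
  have hXb : (Xset.card : ℝ) ≤ ξ*n/8 := by
    by_contra hcon
    push_neg at hcon
    have hκ : (0:ℝ) < ξ^3*n^2/256 := by positivity
    have h1 : (ξ*n/8) * (ξ^3*n^2/256) < (Xset.card : ℝ) * (ξ^3*n^2/256) :=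
      mul_lt_mul_of_pos_right hcon hκ
    have h2 : (Xset.card : ℝ) * (ξ^3*n^2/256) ≤ α * n^3 := le_trans htri hcyc3
    have h3 : α * n^3 ≤ (ξ^4/2^30) * n^3 :=
      mul_le_mul_of_nonneg_right hα (by positivity)
    have h4 : (ξ*n/8) * (ξ^3*n^2/256) = ξ^4*n^3/2048 := by ring
    have h5 : (ξ^4/2^30) * n^3 = ξ^4*n^3/1073741824 := by ring
    have h6 : (0:ℝ) < ξ^4*n^3 := by positivity
    rw [h4] at h1
    rw [h5] at h3
    linarith
  -- degree sum over Sset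
  have hdegsum : ∀ a ∈ Sset, (1/2 - c)*n - ξ*n/8 - (B.card:ℝ) ≤ ((C.filter fun u => G u a).card : ℝ) := by
    intro a ha
    have d1 : Disjoint (A.filter fun u => G u a) (B.filter fun u => G u a) :=
      Finset.disjoint_filter_filter hAB
    have d2 : Disjoint ((A ∪ B).filter fun u => G u a) (C.filter fun u => G u a) :=
      Finset.disjoint_filter_filter (by rw [Finset.disjoint_union_left]; exact ⟨hAC, hBC⟩)
    have hsplit : inDeg G a = ((A.filter fun u => G u a).card + (B.filter fun u => G u a).card)
        + (C.filter fun u => G u a).card := by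
      unfold inDeg inDegOn
      rw [← hunion, Finset.filter_union, Finset.card_union_of_disjoint d2,
        Finset.filter_union, Finset.card_union_of_disjoint d1]
    have hsd2 : (1/2 - c)*n ≤ (inDeg G a : ℝ) := (hsd a).2
    have hA8 : ((A.filter fun u => G u a).card : ℝ) ≤ ξ*n/8 := by
      rw [hSset, Finset.mem_filter] at ha
      exact ha.2
    have hB8 : ((B.filter fun u => G u a).card : ℝ) ≤ (B.card : ℝ) := by
      exact_mod_cast Finset.card_filter_le _ _
    have hsplit' : (inDeg G a : ℝ) = ((A.filter fun u => G u a).card : ℝ)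
        + ((B.filter fun u => G u a).card : ℝ) + ((C.filter fun u => G u a).card : ℝ) := by
      exact_mod_cast congrArg (Nat.cast (R := ℝ)) hsplit
    linarith
  -- double counting
  have hswap : ∑ z ∈ C, ((Sset.filter fun a => G z a).card) = ∑ a ∈ Sset, ((C.filter fun u => G u a).card) :=
    double_count G C Sset
  -- lower bound on the sum
  have hslb : (Sset.card : ℝ) * ((1/2 - c)*n - ξ*n/8 - (B.card:ℝ))
      ≤ ∑ z ∈ C, (((Sset.filter fun a => G z a).card : ℝ)) := by
    have h1 : (Sset.card : ℝ) * ((1/2 - c)*n - ξ*n/8 - (B.card:ℝ))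
        = ∑ _a ∈ Sset, ((1/2 - c)*n - ξ*n/8 - (B.card:ℝ)) := by
      rw [Finset.sum_const, nsmul_eq_mul]
    rw [h1]
    calc ∑ _a ∈ Sset, ((1/2 - c)*n - ξ*n/8 - (B.card:ℝ))
        ≤ ∑ a ∈ Sset, ((C.filter fun u => G u a).card : ℝ) := Finset.sum_le_sum hdegsum
    _ = ((∑ a ∈ Sset, (C.filter fun u => G u a).card : ℕ) : ℝ) := by push_cast; rfl
    _ = ((∑ z ∈ C, ((Sset.filter fun a => G z a).card) : ℕ) : ℝ) := by rw [hswap]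
    _ = _ := by push_cast; rfl
  -- upper bound on the sum
  have hCmXsub : Cm ∪ Xset ⊆ C := Finset.union_subset (Finset.filter_subset _ _) hXsub
  have hCsplit : C = (Cm ∪ Xset) ∪ (C \ (Cm ∪ Xset)) := (Finset.union_sdiff_of_subset hCmXsub).symm
  have hrest : ∀ z ∈ C \ (Cm ∪ Xset), ((Sset.filter fun a => G z a).card : ℝ) ≤ (ξ/4) * Sset.card := by
    intro z hz
    rw [Finset.mem_sdiff, Finset.mem_union] at hz
    obtain ⟨hzC, hznot⟩ := hz
    push_neg at hznot
    obtain ⟨hzCm, hzX⟩ := hznot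
    have h2 : ξ*n/2 < (inDegOn G z A : ℝ) := by
      by_contra hc2
      push_neg at hc2
      exact hzCm (Finset.mem_filter.mpr ⟨hzC, hc2⟩)
    by_contra hc1
    push_neg at hc1
    exact hzX (Finset.mem_filter.mpr ⟨hzC, hc1, h2⟩)
  have hsub2 : ∑ z ∈ C, (((Sset.filter fun a => G z a).card : ℝ))
      ≤ ((Cm.card : ℝ) + ξ*n/8) * Sset.card + (n:ℝ) * ((ξ/4) * Sset.card) := by
    rw [hCsplit]
    rw [Finset.sum_union Finset.sdiff_disjoint.symm]
    have hpart1 : ∑ z ∈ Cm ∪ Xset, (((Sset.filter fun a => G z a).card : ℝ))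
        ≤ ((Cm ∪ Xset).card : ℝ) * Sset.card := by
      calc ∑ z ∈ Cm ∪ Xset, (((Sset.filter fun a => G z a).card : ℝ))
          ≤ ∑ _z ∈ Cm ∪ Xset, (Sset.card : ℝ) := by
            apply Finset.sum_le_sum
            intro z _
            exact_mod_cast Finset.card_filter_le _ _
      _ = ((Cm ∪ Xset).card : ℝ) * Sset.card := by rw [Finset.sum_const, nsmul_eq_mul]
    have hpart2 : ∑ z ∈ C \ (Cm ∪ Xset), (((Sset.filter fun a => G z a).card : ℝ))
        ≤ ((C \ (Cm ∪ Xset)).card : ℝ) * ((ξ/4) * Sset.card) := by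
      calc ∑ z ∈ C \ (Cm ∪ Xset), (((Sset.filter fun a => G z a).card : ℝ))
          ≤ ∑ z ∈ C \ (Cm ∪ Xset), (ξ/4) * (Sset.card:ℝ) := Finset.sum_le_sum hrest
      _ = ((C \ (Cm ∪ Xset)).card : ℝ) * ((ξ/4) * Sset.card) := by rw [Finset.sum_const, nsmul_eq_mul]
    have hu1 : ((Cm ∪ Xset).card : ℝ) ≤ (Cm.card : ℝ) + ξ*n/8 := by
      have := Finset.card_union_le Cm Xset
      have h' : ((Cm ∪ Xset).card : ℝ) ≤ (Cm.card : ℝ) + (Xset.card : ℝ) := by exact_mod_cast this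
      linarith
    have hu2 : ((C \ (Cm ∪ Xset)).card : ℝ) ≤ (n:ℝ) := by
      have h1 : (C \ (Cm ∪ Xset)).card ≤ (univ : Finset (Fin n)).card := Finset.card_le_univ _
      have h2 : (univ : Finset (Fin n)).card = n := by rw [Finset.card_univ, Fintype.card_fin]
      exact_mod_cast h2 ▸ h1
    have hS0 : (0:ℝ) ≤ (Sset.card : ℝ) := Nat.cast_nonneg _
    have hm1 : ((Cm ∪ Xset).card : ℝ) * Sset.card ≤ ((Cm.card : ℝ) + ξ*n/8) * Sset.card :=
      mul_le_mul_of_nonneg_right hu1 hS0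
    have hm2 : ((C \ (Cm ∪ Xset)).card : ℝ) * ((ξ/4) * Sset.card) ≤ (n:ℝ) * ((ξ/4) * Sset.card) :=
      mul_le_mul_of_nonneg_right hu2 (mul_nonneg (div_nonneg hξ.le (by norm_num)) hS0)
    linarith
  -- combine and divide by Sset.card
  have hS0 : (0:ℝ) < (Sset.card : ℝ) := lt_of_lt_of_le (by positivity) hSlb
  have hcombine : (Sset.card : ℝ) * ((1/2 - c)*n - ξ*n/8 - (B.card:ℝ))
      ≤ (Sset.card : ℝ) * ((Cm.card : ℝ) + ξ*n/8 + (ξ/4)*n) := by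
    have := le_trans hslb hsub2
    calc (Sset.card : ℝ) * ((1/2 - c)*n - ξ*n/8 - (B.card:ℝ))
        ≤ ((Cm.card : ℝ) + ξ*n/8) * Sset.card + (n:ℝ) * ((ξ/4) * Sset.card) := this
    _ = (Sset.card : ℝ) * ((Cm.card : ℝ) + ξ*n/8 + (ξ/4)*n) := by ring
  have hdiv : (1/2 - c)*n - ξ*n/8 - (B.card:ℝ) ≤ (Cm.card : ℝ) + ξ*n/8 + (ξ/4)*n :=
    le_of_mul_le_mul_left hcombine hS0
  have hcsmall : c*n ≤ ξ*n/2 := by nlinarith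
  have : (n:ℝ)/2 - (B.card:ℝ) - ξ * n ≤ (Cm.card : ℝ) := by nlinarith [hdiv, hcsmall]
  exact this

end SizeLemma

set_option maxHeartbeats 1600000 in
theorem stmt_9 :
    ∀ η : ℝ, 0 < η → η < 1 →
    ∃ ξ₀ > (0:ℝ), ∀ ξ : ℝ, 0 < ξ → ξ ≤ ξ₀ →
    ∃ ε > (0:ℝ), ∀ α c : ℝ, 0 < α → α ≤ ε → 0 < c → c ≤ ε →
    ∃ N : ℕ, ∀ n : ℕ, N ≤ n → ∀ G : Fin n → Fin n → Prop, IsOriented G →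
      MinSemidegreeGE G ((1/2 - c) * n) →
      ∀ A B C : Finset (Fin n), Disjoint A B → Disjoint A C → Disjoint B C →
        A ∪ B ∪ C = univ → η * n ≤ (A.card : ℝ) →
        (cycIn G A : ℝ) ≤ α * n^3 → (cyc3 G A A C : ℝ) ≤ α * n^3 →
        ∃ Cp Cm : Finset (Fin n), Cp ⊆ C ∧ Cm ⊆ C ∧ Disjoint Cp Cm ∧
          (eOut G Cp A : ℝ) ≤ ξ * n^2 ∧ (eOut G A Cm : ℝ) ≤ ξ * n^2 ∧
          (C.card : ℝ)/2 + ((A.card : ℝ) - (B.card : ℝ))/2 - ξ * n ≤ (Cp.card : ℝ) ∧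
          (C.card : ℝ)/2 + ((A.card : ℝ) - (B.card : ℝ))/2 - ξ * n ≤ (Cm.card : ℝ) := by
  intro η hη hη1
  refine ⟨η/100, by positivity, ?_⟩
  intro ξ hξ hξ0
  refine ⟨ξ^4/2^30, by positivity, ?_⟩
  intro α c hα0 hαε hc0 hcε
  refine ⟨⌈(2^20:ℝ)/ξ⌉₊ + 1, ?_⟩
  intro n hn G hor hsd A B C hAB hAC hBC hunion hAcard hcycA hcyc3
  classical
  have hbig : (2^20:ℝ) ≤ ξ * n := by
    have h1 : ((2^20:ℝ)/ξ) ≤ (⌈(2^20:ℝ)/ξ⌉₊ : ℝ) := Nat.le_ceil _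
    have h2 : ((⌈(2^20:ℝ)/ξ⌉₊ + 1 : ℕ) : ℝ) ≤ (n:ℝ) := by exact_mod_cast hn
    push_cast at h2
    have h3 : (2^20:ℝ)/ξ ≤ (n:ℝ) := by linarith
    rw [div_le_iff₀ hξ] at h3
    linarith [h3]
  have hXn0 : (0:ℝ) < ξ * n := lt_of_lt_of_le (by norm_num) hbig
  have hn0 : (0:ℝ) < n := by nlinarith
  have hξ1 : ξ ≤ 1 := by linarith
  have hξ4 : ξ^4 ≤ ξ := by nlinarith [pow_le_one₀ (le_of_lt hξ) hξ1 (n := 3), sq_nonneg ξ]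
  have hcsmall : c ≤ ξ/2^30 := by nlinarith
  set Cp : Finset (Fin n) := C.filter (fun z => (outDegOn G z A : ℝ) ≤ ξ*n/2) with hCp
  set Cm : Finset (Fin n) := C.filter (fun z => (inDegOn G z A : ℝ) ≤ ξ*n/2) with hCm
  have hNAr := nonadj_bound hor c hsd
  -- cardinality identity
  have hABC : (A.card : ℝ) + B.card + C.card = n := by
    have d2 : Disjoint (A ∪ B) C := by rw [Finset.disjoint_union_left]; exact ⟨hAC, hBC⟩
    have h1 : ((A ∪ B) ∪ C).card = (A ∪ B).card + C.card := Finset.card_union_of_disjoint d2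
    have h2 : (A ∪ B).card = A.card + B.card := Finset.card_union_of_disjoint hAB
    have h3 : ((A ∪ B) ∪ C).card = n := by
      rw [hunion, Finset.card_univ, Fintype.card_fin]
    have : A.card + B.card + C.card = n := by omega
    exact_mod_cast this
  -- disjointness of Cp and Cm
  have hdisjPM : Disjoint Cp Cm := by
    rw [Finset.disjoint_left]
    intro z hzp hzm
    rw [hCp, Finset.mem_filter] at hzp
    rw [hCm, Finset.mem_filter] at hzm
    obtain ⟨hzC, hout⟩ := hzp
    obtain ⟨_, hin⟩ := hzm
    have hzA : z ∉ A := fun h => Finset.disjoint_left.mp hAC h hzC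
    have hcover : A ⊆ (A.filter fun x => G z x) ∪ ((A.filter fun x => G x z)
        ∪ (A.filter fun x => x ≠ z ∧ ¬ G z x ∧ ¬ G x z)) := by
      intro x hx
      rw [Finset.mem_union, Finset.mem_union]
      by_cases h1 : G z x
      · exact Or.inl (Finset.mem_filter.mpr ⟨hx, h1⟩)
      by_cases h2 : G x z
      · exact Or.inr (Or.inl (Finset.mem_filter.mpr ⟨hx, h2⟩))
      · refine Or.inr (Or.inr (Finset.mem_filter.mpr ⟨hx, ?_, h1, h2⟩))
        rintro rfl; exact hzA hx
    have hc1 : A.card ≤ (A.filter fun x => G z x).card + ((A.filter fun x => G x z).card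
        + (A.filter fun x => x ≠ z ∧ ¬ G z x ∧ ¬ G x z).card) := by
      calc A.card ≤ ((A.filter fun x => G z x) ∪ ((A.filter fun x => G x z)
          ∪ (A.filter fun x => x ≠ z ∧ ¬ G z x ∧ ¬ G x z))).card := Finset.card_le_card hcover
      _ ≤ _ := by
          have u1 := Finset.card_union_le (A.filter fun x => G z x) ((A.filter fun x => G x z)
            ∪ (A.filter fun x => x ≠ z ∧ ¬ G z x ∧ ¬ G x z))
          have u2 := Finset.card_union_le (A.filter fun x => G x z)
            (A.filter fun x => x ≠ z ∧ ¬ G z x ∧ ¬ G x z)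
          omega
    have hc1' : (A.card : ℝ) ≤ ((A.filter fun x => G z x).card : ℝ)
        + (((A.filter fun x => G x z).card : ℝ)
        + ((A.filter fun x => x ≠ z ∧ ¬ G z x ∧ ¬ G x z).card : ℝ)) := by
      exact_mod_cast hc1
    have hna := hNAr z A
    have houtr : ((A.filter fun x => G z x).card : ℝ) ≤ ξ*n/2 := hout
    have hinr : ((A.filter fun x => G x z).card : ℝ) ≤ ξ*n/2 := hin
    have hcn0 : c*(n:ℝ) ≤ (ξ/2^30)*n := mul_le_mul_of_nonneg_right hcsmall (le_of_lt hn0)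
    have hξη' : ξ*(n:ℝ) ≤ (η/100)*n := mul_le_mul_of_nonneg_right hξ0 (le_of_lt hn0)
    have hη0 : (0:ℝ) < η*n := by positivity
    linarith
  -- edge bounds
  have houtCp : (eOut G Cp A : ℝ) ≤ ξ * n^2 := by
    have h1 : (eOut G Cp A : ℝ) = ∑ z ∈ Cp, ((outDegOn G z A : ℕ) : ℝ) := by
      unfold eOut; push_cast; rfl
    have h2 : ∑ z ∈ Cp, ((outDegOn G z A : ℕ) : ℝ) ≤ ∑ _z ∈ Cp, ξ*n/2 := by
      apply Finset.sum_le_sum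
      intro z hz
      rw [hCp, Finset.mem_filter] at hz
      exact hz.2
    have h3 : ∑ _z ∈ Cp, ξ*n/2 = (Cp.card : ℝ) * (ξ*n/2) := by
      rw [Finset.sum_const, nsmul_eq_mul]
    have h4 : (Cp.card : ℝ) ≤ n := by
      have h5 := Finset.card_le_univ Cp
      simp only [Finset.card_univ, Fintype.card_fin] at h5
      exact_mod_cast h5
    have h6 : (Cp.card : ℝ) * (ξ*n/2) ≤ (n:ℝ) * (ξ*n/2) :=
      mul_le_mul_of_nonneg_right h4 (by positivity)
    have h7 : (n:ℝ) * (ξ*n/2) = ξ * n^2 / 2 := by ring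
    have h8 : (0:ℝ) ≤ ξ * n^2 := by positivity
    linarith
  have houtCm : (eOut G A Cm : ℝ) ≤ ξ * n^2 := by
    have h0 : eOut G A Cm = ∑ z ∈ Cm, inDegOn G z A := eOut_eq_sum_inDegOn G A Cm
    have h1 : (eOut G A Cm : ℝ) = ∑ z ∈ Cm, ((inDegOn G z A : ℕ) : ℝ) := by
      rw [h0]; push_cast; rfl
    have h2 : ∑ z ∈ Cm, ((inDegOn G z A : ℕ) : ℝ) ≤ ∑ _z ∈ Cm, ξ*n/2 := by
      apply Finset.sum_le_sum
      intro z hz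
      rw [hCm, Finset.mem_filter] at hz
      exact hz.2
    have h3 : ∑ _z ∈ Cm, ξ*n/2 = (Cm.card : ℝ) * (ξ*n/2) := by
      rw [Finset.sum_const, nsmul_eq_mul]
    have h4 : (Cm.card : ℝ) ≤ n := by
      have h5 := Finset.card_le_univ Cm
      simp only [Finset.card_univ, Fintype.card_fin] at h5
      exact_mod_cast h5
    have h6 : (Cm.card : ℝ) * (ξ*n/2) ≤ (n:ℝ) * (ξ*n/2) :=
      mul_le_mul_of_nonneg_right h4 (by positivity)
    have h7 : (n:ℝ) * (ξ*n/2) = ξ * n^2 / 2 := by ring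
    have h8 : (0:ℝ) ≤ ξ * n^2 := by positivity
    linarith
  -- size of Cm
  have hsizeCm : (n:ℝ)/2 - (B.card:ℝ) - ξ * n ≤ (Cm.card : ℝ) :=
    sizeLemma hor η ξ α c hη hη1 hξ hξ0 hc0 hcε hαε hbig hsd A B C hAB hAC hBC hunion hAcard
      hcycA hcyc3
  -- size of Cp via the flipped graph
  have hsizeCp : (n:ℝ)/2 - (B.card:ℝ) - ξ * n ≤ (Cp.card : ℝ) := by
    have hor' : IsOriented (fun a b => G b a) := isOriented_flip G hor
    have hsd' : MinSemidegreeGE (fun a b => G b a) ((1/2 - c) * n) := by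
      intro v
      refine ⟨?_, ?_⟩
      · rw [outDeg_flip]; exact (hsd v).2
      · rw [inDeg_flip]; exact (hsd v).1
    have hcycA' : (cycIn (fun a b => G b a) A : ℝ) ≤ α * n^3 := by
      rw [cycIn_flip]; exact hcycA
    have hcyc3' : (cyc3 (fun a b => G b a) A A C : ℝ) ≤ α * n^3 := by
      rw [cyc3_flip]; exact hcyc3
    have h := sizeLemma hor' η ξ α c hη hη1 hξ hξ0 hc0 hcε hαε hbig hsd' A B C hAB hAC hBC
      hunion hAcard hcycA' hcyc3'
    have heq : C.filter (fun z => (inDegOn (fun a b => G b a) z A : ℝ) ≤ ξ*n/2) = Cp := by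
      rw [hCp]
      apply Finset.filter_congr
      intro z _
      rw [inDegOn_flip]
    rw [heq] at h
    exact h
  refine ⟨Cp, Cm, Finset.filter_subset _ _, Finset.filter_subset _ _, hdisjPM, houtCp, houtCm, ?_, ?_⟩
  · linarith
  · linarith
end LemM
end

section
/- Let c > 0, let G be an oriented graph on n vertices with δ⁰(G) ≥ (1/2 - c)n, and let A ⊆ V(G). Then the number of transitive triangles contained in A satisfies trn(A) ≥ |A|³/8 - cn³, and consequently 3·cyc(A) - trn(A) ≤ 4cn³. -/
open Finset
open scoped Classical

section AuxTrn
variable {n : ℕ} {G : Fin n → Fin n → Prop}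

lemma aux_card_partition (hirr : ∀ v, ¬ G v v) (hasym : ∀ u v, G u v → ¬ G v u)
    {B : Finset (Fin n)} {v : Fin n} (hv : v ∈ B) :
    B.card = 1 + (B.filter fun u => G v u).card + (B.filter fun u => G u v).card
      + (B.filter fun w => w ≠ v ∧ ¬G v w ∧ ¬G w v).card := by
  have h1 := (card_filter_add_card_filter_not (s := B) (p := fun w => w = v)).symm
  have e1 : B.filter (fun w => w = v) = {v} := by
    ext w; simp only [mem_filter, mem_singleton]
    constructor
    · rintro ⟨_, rfl⟩; rfl
    · rintro rfl; exact ⟨hv, rfl⟩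
  have h2 := (card_filter_add_card_filter_not
      (s := B.filter fun w => ¬ w = v) (p := fun w => G v w)).symm
  have h3 := (card_filter_add_card_filter_not
      (s := (B.filter fun w => ¬ w = v).filter fun w => ¬ G v w) (p := fun w => G w v)).symm
  have e2 : (B.filter fun w => ¬ w = v).filter (fun w => G v w) = B.filter fun u => G v u := by
    rw [filter_filter]
    apply filter_congr
    intro w _
    constructor
    · tauto
    · intro h; exact ⟨fun he => hirr v (he ▸ h), h⟩
  have e3 : ((B.filter fun w => ¬ w = v).filter fun w => ¬ G v w).filter (fun w => G w v)
      = B.filter fun u => G u v := by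
    rw [filter_filter, filter_filter]
    apply filter_congr
    intro w _
    have h1 : ∀ w, G w v → ¬ G v w := fun w h => hasym _ _ h
    have h2 : ∀ w : Fin n, G w v → ¬ w = v := fun w h he => hirr v (he ▸ h)
    exact ⟨fun h => by tauto, fun h => by have := h1 w h; have := h2 w h; tauto⟩
  have e4 : ((B.filter fun w => ¬ w = v).filter fun w => ¬ G v w).filter (fun w => ¬ G w v)
      = B.filter fun w => w ≠ v ∧ ¬G v w ∧ ¬G w v := by
    ext w
    simp only [mem_filter, ne_eq]
    tauto
  rw [e2] at h2
  rw [e3, e4] at h3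
  rw [e1] at h1
  simp only [card_singleton] at h1
  omega

lemma aux_trn_eq (hirr : ∀ v, ¬ G v v)
    (hasym : ∀ u v, G u v → ¬ G v u) (A : Finset (Fin n)) :
    trnIn G A
      = ((A ×ˢ (A ×ˢ A)).filter fun x => G x.1 x.2.1 ∧ G x.2.1 x.2.2 ∧ G x.1 x.2.2).card := by
  unfold trnIn
  refine (Finset.card_bij (fun x _ => ({x.1, x.2.1, x.2.2} : Finset (Fin n))) ?_ ?_ ?_).symm
  · rintro ⟨a1, a2, a3⟩ hx
    simp only [mem_filter, mem_product] at hx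
    obtain ⟨⟨hA1, hA2, hA3⟩, e1, e2, e3⟩ := hx
    have d12 : a1 ≠ a2 := fun h => hirr _ (h ▸ e1)
    have d23 : a2 ≠ a3 := fun h => hirr _ (h ▸ e2)
    have d13 : a1 ≠ a3 := fun h => hirr _ (h ▸ e3)
    simp only [mem_filter, mem_powersetCard]
    refine ⟨⟨?_, ?_⟩, a1, a2, a3, e1, e2, e3, rfl⟩
    · intro x hx
      simp only [mem_insert, mem_singleton] at hx
      rcases hx with rfl | rfl | rfl <;> assumption
    · rw [card_insert_of_notMem (by simp [d12, d13]),
        card_insert_of_notMem (by simp [d23]), card_singleton]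
  · rintro ⟨a1, a2, a3⟩ ha ⟨b1, b2, b3⟩ hb h
    simp only [mem_filter, mem_product] at ha hb
    obtain ⟨-, e1, e2, e3⟩ := ha
    obtain ⟨-, f1, f2, f3⟩ := hb
    replace h : ({a1, a2, a3} : Finset (Fin n)) = {b1, b2, b3} := h
    have n1 : ¬ G a2 a1 := hasym _ _ e1
    have n2 : ¬ G a3 a2 := hasym _ _ e2
    have n3 : ¬ G a3 a1 := hasym _ _ e3
    have i1 : ¬ G a1 a1 := hirr _
    have i2 : ¬ G a2 a2 := hirr _
    have i3 : ¬ G a3 a3 := hirr _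
    have hb1 : b1 = a1 ∨ b1 = a2 ∨ b1 = a3 := by
      have : b1 ∈ ({a1, a2, a3} : Finset (Fin n)) := by rw [h]; simp
      simpa using this
    have hb2 : b2 = a1 ∨ b2 = a2 ∨ b2 = a3 := by
      have : b2 ∈ ({a1, a2, a3} : Finset (Fin n)) := by rw [h]; simp
      simpa using this
    have hb3 : b3 = a1 ∨ b3 = a2 ∨ b3 = a3 := by
      have : b3 ∈ ({a1, a2, a3} : Finset (Fin n)) := by rw [h]; simp
      simpa using this
    clear h
    rcases hb1 with rfl | rfl | rfl <;> rcases hb2 with rfl | rfl | rfl <;>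
      rcases hb3 with rfl | rfl | rfl <;> first | rfl | tauto
  · intro s hs
    simp only [mem_filter, mem_powersetCard] at hs
    obtain ⟨⟨hsub, -⟩, a, b, c, g1, g2, g3, rfl⟩ := hs
    have ha : a ∈ A := hsub (by simp)
    have hb : b ∈ A := hsub (by simp)
    have hc : c ∈ A := hsub (by simp)
    exact ⟨(a, b, c), by simp only [mem_filter, mem_product]; exact ⟨⟨ha, hb, hc⟩, g1, g2, g3⟩, rfl⟩

lemma aux_not_both (hirr : ∀ v, ¬ G v v) (hasym : ∀ u v, G u v → ¬ G v u)
    {s : Finset (Fin n)} (h1 : IsCycTri G s) (h2 : IsTrnTri G s) : False := by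
  obtain ⟨a1, a2, a3, e1, e2, e3, rfl⟩ := h1
  obtain ⟨b1, b2, b3, f1, f2, f3, hs⟩ := h2
  have n1 : ¬ G a2 a1 := hasym _ _ e1
  have n2 : ¬ G a3 a2 := hasym _ _ e2
  have n3 : ¬ G a1 a3 := hasym _ _ e3
  have i1 : ¬ G a1 a1 := hirr _
  have i2 : ¬ G a2 a2 := hirr _
  have i3 : ¬ G a3 a3 := hirr _
  have hb1 : b1 = a1 ∨ b1 = a2 ∨ b1 = a3 := by
    have : b1 ∈ ({a1, a2, a3} : Finset (Fin n)) := by rw [hs]; simp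
    simpa using this
  have hb2 : b2 = a1 ∨ b2 = a2 ∨ b2 = a3 := by
    have : b2 ∈ ({a1, a2, a3} : Finset (Fin n)) := by rw [hs]; simp
    simpa using this
  have hb3 : b3 = a1 ∨ b3 = a2 ∨ b3 = a3 := by
    have : b3 ∈ ({a1, a2, a3} : Finset (Fin n)) := by rw [hs]; simp
    simpa using this
  clear hs
  rcases hb1 with rfl | rfl | rfl <;> rcases hb2 with rfl | rfl | rfl <;>
    rcases hb3 with rfl | rfl | rfl <;> tauto

lemma aux_cyc_trn (hirr : ∀ v, ¬ G v v) (hasym : ∀ u v, G u v → ¬ G v u)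
    (A : Finset (Fin n)) : cycIn G A + trnIn G A ≤ (A.card).choose 3 := by
  unfold cycIn trnIn
  rw [← card_union_of_disjoint (by
    rw [Finset.disjoint_left]
    intro s hs1 hs2
    rw [mem_filter] at hs1 hs2
    exact aux_not_both hirr hasym hs1.2 hs2.2)]
  calc _ ≤ (A.powersetCard 3).card :=
        card_le_card (union_subset (filter_subset _ _) (filter_subset _ _))
    _ = _ := by rw [card_powersetCard]

end AuxTrn
lemma aux_count {n : ℕ} {G : Fin n → Fin n → Prop} (hirr : ∀ v, ¬ G v v)
    (hasym : ∀ u v, G u v → ¬ G v u) (A : Finset (Fin n)) :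
    (∑ v ∈ A, ((A.filter fun u => G v u).offDiag.card
      + (A.filter fun u => G u v).offDiag.card))
    ≤ 4 * ((A ×ˢ (A ×ˢ A)).filter fun x => G x.1 x.2.1 ∧ G x.2.1 x.2.2 ∧ G x.1 x.2.2).card
      + A.card * ∑ u ∈ A, (univ.filter fun w => w ≠ u ∧ ¬G u w ∧ ¬G w u).card := by
  classical
  set T := ((A ×ˢ (A ×ˢ A)).filter fun x => G x.1 x.2.1 ∧ G x.2.1 x.2.2 ∧ G x.1 x.2.2) with hT
  set Sout := A.sigma (fun v => (A.filter fun u => G v u).offDiag) with hSout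
  set Sin := A.sigma (fun v => (A.filter fun u => G u v).offDiag) with hSin
  set Q := A.sigma (fun u => univ.filter fun w => w ≠ u ∧ ¬G u w ∧ ¬G w u) with hQ
  have memSout : ∀ x : Σ _ : Fin n, Fin n × Fin n, x ∈ Sout ↔
      x.1 ∈ A ∧ x.2.1 ∈ A ∧ x.2.2 ∈ A ∧ G x.1 x.2.1 ∧ G x.1 x.2.2 ∧ x.2.1 ≠ x.2.2 := by
    rintro ⟨v, u, w⟩
    simp only [hSout, mem_sigma, mem_offDiag, mem_filter, ne_eq]
    tauto
  have memSin : ∀ x : Σ _ : Fin n, Fin n × Fin n, x ∈ Sin ↔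
      x.1 ∈ A ∧ x.2.1 ∈ A ∧ x.2.2 ∈ A ∧ G x.2.1 x.1 ∧ G x.2.2 x.1 ∧ x.2.1 ≠ x.2.2 := by
    rintro ⟨v, u, w⟩
    simp only [hSin, mem_sigma, mem_offDiag, mem_filter, ne_eq]
    tauto
  set Goodout := Sout.filter (fun x => G x.2.1 x.2.2 ∨ G x.2.2 x.2.1) with hGoodout
  set Badout := Sout.filter (fun x => ¬(G x.2.1 x.2.2 ∨ G x.2.2 x.2.1)) with hBadout
  set Goodin := Sin.filter (fun x => G x.2.1 x.2.2 ∨ G x.2.2 x.2.1) with hGoodin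
  set Badin := Sin.filter (fun x => ¬(G x.2.1 x.2.2 ∨ G x.2.2 x.2.1)) with hBadin
  have hsplitout : Goodout.card + Badout.card = Sout.card :=
    card_filter_add_card_filter_not _
  have hsplitin : Goodin.card + Badin.card = Sin.card :=
    card_filter_add_card_filter_not _
  have hgoodout : Goodout.card ≤ 2 * T.card := by
    refine Finset.card_le_mul_card_image_of_maps_to
      (f := fun x : Σ _ : Fin n, Fin n × Fin n =>
        if G x.2.1 x.2.2 then (x.1, x.2.1, x.2.2) else (x.1, x.2.2, x.2.1))
      (s := Goodout) (t := T) ?_ 2 ?_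
    · rintro ⟨v, u, w⟩ hx
      simp only [hGoodout, mem_filter] at hx
      obtain ⟨hxS, hor⟩ := hx
      rw [memSout] at hxS
      obtain ⟨hv, hu, hw, g1, g2, hne⟩ := hxS
      by_cases h : G u w
      · simp only [if_pos h, hT, mem_filter, mem_product]
        exact ⟨⟨hv, hu, hw⟩, g1, h, g2⟩
      · have h' : G w u := by tauto
        simp only [if_neg h, hT, mem_filter, mem_product]
        exact ⟨⟨hv, hw, hu⟩, g2, h', g1⟩
    · rintro ⟨b1, b2, b3⟩ hb
      have hsub : (Goodout.filter fun x =>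
            (if G x.2.1 x.2.2 then (x.1, x.2.1, x.2.2) else (x.1, x.2.2, x.2.1)) = (b1, b2, b3))
          ⊆ {⟨b1, (b2, b3)⟩, ⟨b1, (b3, b2)⟩} := by
        rintro ⟨v, u, w⟩ hx
        simp only [mem_filter] at hx
        obtain ⟨-, heq⟩ := hx
        by_cases h : G u w
        · rw [if_pos h] at heq
          simp only [Prod.mk.injEq] at heq
          obtain ⟨rfl, rfl, rfl⟩ := heq
          simp
        · rw [if_neg h] at heq
          simp only [Prod.mk.injEq] at heq
          obtain ⟨rfl, rfl, rfl⟩ := heq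
          simp
      calc _ ≤ ({⟨b1, (b2, b3)⟩, ⟨b1, (b3, b2)⟩} :
            Finset (Σ _ : Fin n, Fin n × Fin n)).card := card_le_card hsub
        _ ≤ 2 := (card_insert_le _ _).trans (by simp)
  have hgoodin : Goodin.card ≤ 2 * T.card := by
    refine Finset.card_le_mul_card_image_of_maps_to
      (f := fun x : Σ _ : Fin n, Fin n × Fin n =>
        if G x.2.1 x.2.2 then (x.2.1, x.2.2, x.1) else (x.2.2, x.2.1, x.1))
      (s := Goodin) (t := T) ?_ 2 ?_
    · rintro ⟨v, u, w⟩ hx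
      simp only [hGoodin, mem_filter] at hx
      obtain ⟨hxS, hor⟩ := hx
      rw [memSin] at hxS
      obtain ⟨hv, hu, hw, g1, g2, hne⟩ := hxS
      by_cases h : G u w
      · simp only [if_pos h, hT, mem_filter, mem_product]
        exact ⟨⟨hu, hw, hv⟩, h, g2, g1⟩
      · have h' : G w u := by tauto
        simp only [if_neg h, hT, mem_filter, mem_product]
        exact ⟨⟨hw, hu, hv⟩, h', g1, g2⟩
    · rintro ⟨b1, b2, b3⟩ hb
      have hsub : (Goodin.filter fun x =>
            (if G x.2.1 x.2.2 then (x.2.1, x.2.2, x.1) else (x.2.2, x.2.1, x.1)) = (b1, b2, b3))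
          ⊆ {⟨b3, (b1, b2)⟩, ⟨b3, (b2, b1)⟩} := by
        rintro ⟨v, u, w⟩ hx
        simp only [mem_filter] at hx
        obtain ⟨-, heq⟩ := hx
        by_cases h : G u w
        · rw [if_pos h] at heq
          simp only [Prod.mk.injEq] at heq
          obtain ⟨rfl, rfl, rfl⟩ := heq
          simp
        · rw [if_neg h] at heq
          simp only [Prod.mk.injEq] at heq
          obtain ⟨rfl, rfl, rfl⟩ := heq
          simp
      calc _ ≤ ({⟨b3, (b1, b2)⟩, ⟨b3, (b2, b1)⟩} :
            Finset (Σ _ : Fin n, Fin n × Fin n)).card := card_le_card hsub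
        _ ≤ 2 := (card_insert_le _ _).trans (by simp)
  have hbaddisj : Disjoint Badout Badin := by
    rw [Finset.disjoint_left]
    intro x hx hy
    simp only [hBadout, hBadin, mem_filter] at hx hy
    have h1 := (memSout x).1 hx.1
    have h2 := (memSin x).1 hy.1
    exact hasym _ _ h1.2.2.2.1 h2.2.2.2.1
  have hbad : Badout.card + Badin.card ≤ A.card * Q.card := by
    rw [← card_union_of_disjoint hbaddisj]
    have hle : (Badout ∪ Badin).card ≤ (A ×ˢ Q).card := by
      apply Finset.card_le_card_of_injOn
        (f := fun x : Σ _ : Fin n, Fin n × Fin n => (x.1, (⟨x.2.1, x.2.2⟩ : Σ _ : Fin n, Fin n)))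
      · intro x hx
        rw [mem_coe, mem_union] at hx
        have hfacts : x.1 ∈ A ∧ x.2.1 ∈ A ∧ x.2.2 ∈ A ∧ x.2.1 ≠ x.2.2
            ∧ ¬ G x.2.1 x.2.2 ∧ ¬ G x.2.2 x.2.1 := by
          rcases hx with hx | hx <;> simp only [hBadout, hBadin, mem_filter] at hx
          · have h1 := (memSout x).1 hx.1
            tauto
          · have h1 := (memSin x).1 hx.1
            tauto
        simp only [mem_coe, mem_product, hQ, mem_sigma, mem_filter, mem_univ, true_and, ne_eq]
        exact ⟨hfacts.1, hfacts.2.1, fun h => hfacts.2.2.2.1 h.symm,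
          hfacts.2.2.2.2.1, hfacts.2.2.2.2.2⟩
      · rintro ⟨v, u, w⟩ - ⟨v', u', w'⟩ - h
        simp only [Prod.mk.injEq, Sigma.mk.inj_iff, heq_eq_eq] at h
        obtain ⟨rfl, rfl, rfl⟩ := h
        rfl
    calc (Badout ∪ Badin).card ≤ (A ×ˢ Q).card := hle
      _ = A.card * Q.card := card_product _ _
  have hsum : (∑ v ∈ A, ((A.filter fun u => G v u).offDiag.card
      + (A.filter fun u => G u v).offDiag.card)) = Sout.card + Sin.card := by
    rw [hSout, hSin, card_sigma, card_sigma, ← Finset.sum_add_distrib]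
  have hQcard : Q.card = ∑ u ∈ A, (univ.filter fun w => w ≠ u ∧ ¬G u w ∧ ¬G w u).card :=
    card_sigma _ _
  rw [hsum, ← hQcard]
  omega

set_option maxHeartbeats 1000000 in
theorem stmt_10 (c : ℝ) (hc : 0 < c) :
    ∃ N : ℕ, ∀ n : ℕ, N ≤ n → ∀ G : Fin n → Fin n → Prop, IsOriented G →
      MinSemidegreeGE G ((1/2 - c) * n) →
      ∀ A : Finset (Fin n),
        (A.card : ℝ)^3 / 8 - c * n^3 ≤ (trnIn G A : ℝ) ∧
        3 * (cycIn G A : ℝ) - (trnIn G A : ℝ) ≤ 4 * c * n^3 := by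
  refine ⟨⌈(2:ℝ)/c⌉₊ + 4, fun n hn G hG hdeg A => ?_⟩
  obtain ⟨hirr, hasym⟩ := hG
  have hn' : (2:ℝ)/c + 4 ≤ (n : ℝ) := by
    have h1 : ((⌈(2:ℝ)/c⌉₊ + 4 : ℕ) : ℝ) ≤ (n : ℝ) := by exact_mod_cast hn
    have h2 := Nat.le_ceil ((2:ℝ)/c)
    push_cast at h1
    linarith
  have hN0 : (0:ℝ) ≤ n := Nat.cast_nonneg _
  set a : ℝ := (A.card : ℝ) with haa
  have ha0 : 0 ≤ a := Nat.cast_nonneg _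
  have haN : a ≤ n := by
    have := card_le_card (subset_univ A)
    rw [card_univ, Fintype.card_fin] at this
    rw [haa]
    exact_mod_cast this
  have htrn0 : (0:ℝ) ≤ (trnIn G A : ℝ) := Nat.cast_nonneg _
  have hsq : ∀ m : ℕ, m ≤ m * m := by
    intro m
    rcases m with _ | m
    · simp
    · exact Nat.le_mul_of_pos_left _ (Nat.succ_pos m)
  have part1 : a^3/8 - c*n^3 ≤ (trnIn G A : ℝ) := by
    by_cases hc8 : (1:ℝ)/8 ≤ c
    · have h3 : a^3 ≤ (n:ℝ)^3 := pow_le_pow_left₀ ha0 haN 3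
      nlinarith [pow_nonneg hN0 3]
    · push_neg at hc8
      by_cases hsmall : a < 2*c*n + 2
      · have hcn : 2 ≤ c * n := by
          have := mul_le_mul_of_nonneg_left hn' hc.le
          rw [mul_add] at this
          rw [mul_div_cancel₀ _ (ne_of_gt hc)] at this  -- c * (2/c) = 2
          nlinarith
        have ha3 : a ≤ 3*(c*n) := by linarith
        have hp : a^3 ≤ (3*(c*n))^3 := pow_le_pow_left₀ ha0 ha3 3
        have hcn0 : 0 ≤ c * n := by linarith
        nlinarith [pow_nonneg hcn0 3, mul_nonneg (mul_nonneg hc.le hc.le) (pow_nonneg hN0 3),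
          sq_nonneg c]
      · push_neg at hsmall
        -- global non-adjacency bound
        have hr : ∀ v : Fin n,
            ((univ.filter fun w => w ≠ v ∧ ¬G v w ∧ ¬G w v).card : ℝ) ≤ 2*c*n - 1 := by
          intro v
          have hp := aux_card_partition hirr hasym (mem_univ v)
          have h1 := (hdeg v).1
          have h2 := (hdeg v).2
          have hcast := congrArg (Nat.cast : ℕ → ℝ) hp
          rw [card_univ, Fintype.card_fin] at hcast
          push_cast at hcast
          unfold outDeg outDegOn at h1
          unfold inDeg inDegOn at h2
          nlinarith
        -- per-vertex in+out degree on A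
        have hst : ∀ v ∈ A, a - 2*c*n ≤ ((A.filter fun u => G v u).card : ℝ)
            + ((A.filter fun u => G u v).card : ℝ) := by
          intro v hv
          have hp := aux_card_partition hirr hasym (G := G) hv
          have hsub : ((A.filter fun w => w ≠ v ∧ ¬G v w ∧ ¬G w v).card : ℝ) ≤ 2*c*n - 1 := by
            refine le_trans ?_ (hr v)
            exact_mod_cast card_le_card (filter_subset_filter _ (subset_univ A))
          have hcast := congrArg (Nat.cast : ℕ → ℝ) hp
          push_cast at hcast
          linarith
        -- convexity per vertex
        have hconv : ∀ v ∈ A, (a - 2*c*n) * (a - 2*c*n - 2) / 2 ≤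
            (((A.filter fun u => G v u).offDiag.card : ℝ)
              + ((A.filter fun u => G u v).offDiag.card : ℝ)) := by
          intro v hv
          set s : ℝ := ((A.filter fun u => G v u).card : ℝ) with hs
          set t : ℝ := ((A.filter fun u => G u v).card : ℝ) with ht
          have hs0 : 0 ≤ s := Nat.cast_nonneg _
          have ht0 : 0 ≤ t := Nat.cast_nonneg _
          have e1 : ((A.filter fun u => G v u).offDiag.card : ℝ) = s*s - s := by
            rw [offDiag_card, Nat.cast_sub (hsq _)]
            push_cast
            rfl
          have e2 : ((A.filter fun u => G u v).offDiag.card : ℝ) = t*t - t := by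
            rw [offDiag_card, Nat.cast_sub (hsq _)]
            push_cast
            rfl
          have hq := hst v hv
          have hM2 : 2 ≤ a - 2*c*n := by linarith
          rw [e1, e2]
          nlinarith [sq_nonneg (s - t),
            mul_nonneg (by linarith : (0:ℝ) ≤ s + t - (a - 2*c*n))
              (by linarith : (0:ℝ) ≤ s + t + (a - 2*c*n) - 2)]
        -- sum of convexity bounds
        have hsumconv : a * ((a - 2*c*n) * (a - 2*c*n - 2) / 2) ≤
            ((∑ v ∈ A, ((A.filter fun u => G v u).offDiag.card
              + (A.filter fun u => G u v).offDiag.card) : ℕ) : ℝ) := by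
          push_cast
          have := Finset.card_nsmul_le_sum A
            (fun v => (((A.filter fun u => G v u).offDiag.card : ℝ)
              + ((A.filter fun u => G u v).offDiag.card : ℝ)))
            ((a - 2*c*n) * (a - 2*c*n - 2) / 2) hconv
          rw [nsmul_eq_mul] at this
          exact this
        -- Q bound
        have hQb : ((∑ u ∈ A, (univ.filter fun w => w ≠ u ∧ ¬G u w ∧ ¬G w u).card : ℕ) : ℝ)
            ≤ a * (2*c*n - 1) := by
          push_cast
          have := Finset.sum_le_card_nsmul A
            (fun u => ((univ.filter fun w => w ≠ u ∧ ¬G u w ∧ ¬G w u).card : ℝ))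
            (2*c*n - 1) (fun u _ => hr u)
          rw [nsmul_eq_mul] at this
          exact this
        have hcount := aux_count hirr hasym A
        have htrneq := aux_trn_eq hirr hasym A
        rw [← htrneq] at hcount
        have hcountR : ((∑ v ∈ A, ((A.filter fun u => G v u).offDiag.card
              + (A.filter fun u => G u v).offDiag.card) : ℕ) : ℝ)
            ≤ 4 * (trnIn G A : ℝ) + a * (a * (2*c*n - 1)) := by
          have h1 : ((∑ v ∈ A, ((A.filter fun u => G v u).offDiag.card
              + (A.filter fun u => G u v).offDiag.card) : ℕ) : ℝ)
              ≤ 4 * (trnIn G A : ℝ) + a *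
                ((∑ u ∈ A, (univ.filter fun w => w ≠ u ∧ ¬G u w ∧ ¬G w u).card : ℕ) : ℝ) := by
            rw [haa]
            exact_mod_cast hcount
          linarith [mul_le_mul_of_nonneg_left hQb ha0]
        have key : a * ((a - 2*c*n) * (a - 2*c*n - 2) / 2)
            ≤ 4 * (trnIn G A : ℝ) + a * (a * (2*c*n - 1)) := le_trans hsumconv hcountR
        nlinarith [mul_nonneg (mul_nonneg (mul_nonneg hc.le hN0)
            (by linarith : (0:ℝ) ≤ n - a)) (by linarith : (0:ℝ) ≤ n + a),
          mul_nonneg (mul_nonneg ha0 hc.le) hN0,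
          mul_nonneg (mul_nonneg ha0 (mul_nonneg hc.le hc.le)) (mul_nonneg hN0 hN0)]
  refine ⟨part1, ?_⟩
  have hct := aux_cyc_trn hirr hasym A
  have h6 : 6 * (A.card).choose 3 ≤ A.card ^ 3 := by
    have e : (6 : ℕ) * (A.card).choose 3 = (A.card).descFactorial 3 := by
      rw [Nat.descFactorial_eq_factorial_mul_choose]
      norm_num [Nat.factorial]
    rw [e]
    exact Nat.descFactorial_le_pow _ _
  have hctR : (cycIn G A : ℝ) + (trnIn G A : ℝ) ≤ a^3 / 6 := by
    have h1 : ((cycIn G A + trnIn G A : ℕ) : ℝ) ≤ (((A.card).choose 3 : ℕ) : ℝ) := by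
      exact_mod_cast hct
    have h2 : ((6 * (A.card).choose 3 : ℕ) : ℝ) ≤ ((A.card ^ 3 : ℕ) : ℝ) := by
      exact_mod_cast h6
    push_cast at h1 h2
    linarith
  linarith
end
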